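/- arXiv:2006.12158 — 5 statements merged into one kernel-verified Lean document; each statement's English description precedes it below -/
import Mathlib

section
/- Let I ⊆ ℝ be an open interval, ŝ₀ ∈ I, and let H₀ be a complex symmetric n×n matrix with Im H₀ positive definite. Then the Riccati equation (d/ds)H(s) + H(s) C H(s) + D(s) = 0 has exactly one differentiable solution H : I → ℂ^{n×n} with H(ŝ₀) = H₀; moreover, for every s ∈ I the matrix H(s) is symmetric and Im H(s) is positive definite. -/
open Matrix

attribute [local instance] Matrix.normedAddCommGroup Matrix.normedSpace

/-- The constant `n × n` matrix `C` with `C₁₁ = 0`, `C_jj = 2` for `j = 2, …, n`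
and `C_jk = 0` off the diagonal (indices in `Fin n`, where `0 : Fin n`
corresponds to the index `1`). -/
def riccatiC (n : ℕ) : Matrix (Fin n) (Fin n) ℂ :=
  Matrix.of fun j k => if j = k ∧ (j : ℕ) ≠ 0 then 2 else 0

/-- `H` is a differentiable solution of the Riccati equation
`(d/ds) H + H C H + D = 0` on the set `I`. -/
def IsRiccatiSol (n : ℕ) (I : Set ℝ) (D : ℝ → Matrix (Fin n) (Fin n) ℝ)
    (H : ℝ → Matrix (Fin n) (Fin n) ℂ) : Prop :=
  ∀ s ∈ I, HasDerivAt H (-(H s * riccatiC n * H s + (D s).map (fun x => (x : ℂ)))) s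


open Set Metric

set_option linter.unusedSectionVars false


section LinearODE

variable {E : Type*} [NormedAddCommGroup E] [NormedSpace ℝ E] [CompleteSpace E]

/-- Uniqueness for a linear ODE on a closed interval, with the initial condition at an
arbitrary point of the interval. -/
lemma linear_ODE_unique {M : ℝ → E →L[ℝ] E} {a b c : ℝ} (hab : a ≤ b) (hc : c ∈ Icc a b)
    (hM : ContinuousOn M (Icc a b)) {y z : ℝ → E}
    (hy : ∀ u ∈ Icc a b, HasDerivAt y (M u (y u)) u)
    (hz : ∀ u ∈ Icc a b, HasDerivAt z (M u (z u)) u)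
    (hyz : y c = z c) : EqOn y z (Icc a b) := by
  obtain ⟨L, hL⟩ := (isCompact_Icc (a := a) (b := b)).exists_bound_of_continuousOn hM
  set K : NNReal := (max L 0).toNNReal with hK
  set v : ℝ → E → E := fun t x => M (max a (min b t)) x with hv
  have hmem : ∀ t, max a (min b t) ∈ Icc a b := fun t =>
    ⟨le_max_left _ _, max_le hab (min_le_left _ _)⟩
  have hclamp : ∀ t ∈ Icc a b, max a (min b t) = t := fun t ht => by
    rw [min_eq_right ht.2, max_eq_right ht.1]
  have hlip : ∀ t, LipschitzOnWith K (v t) univ := by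
    intro t
    refine ((M _).lipschitz.weaken ?_).lipschitzOnWith
    rw [← norm_toNNReal, hK]
    exact Real.toNNReal_mono (le_max_of_le_left (hL _ (hmem t)))
  have hyc : ContinuousOn y (Icc a b) := fun u hu => (hy u hu).continuousAt.continuousWithinAt
  have hzc : ContinuousOn z (Icc a b) := fun u hu => (hz u hu).continuousAt.continuousWithinAt
  rw [← Icc_union_Icc_eq_Icc hc.1 hc.2]
  refine EqOn.union ?_ ?_
  · refine ODE_solution_unique_of_mem_Icc_left (v := v) (s := fun _ => univ) (fun t _ => hlip t)
      (hyc.mono (Icc_subset_Icc_right hc.2)) ?_ (fun _ _ => trivial)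
      (hzc.mono (Icc_subset_Icc_right hc.2)) ?_ (fun _ _ => trivial) hyz
    · intro t ht
      have ht' : t ∈ Icc a b := ⟨ht.1.le, ht.2.trans hc.2⟩
      simpa only [hv, hclamp t ht'] using (hy t ht').hasDerivWithinAt
    · intro t ht
      have ht' : t ∈ Icc a b := ⟨ht.1.le, ht.2.trans hc.2⟩
      simpa only [hv, hclamp t ht'] using (hz t ht').hasDerivWithinAt
  · refine ODE_solution_unique_of_mem_Icc_right (v := v) (s := fun _ => univ) (fun t _ => hlip t)
      (hyc.mono (Icc_subset_Icc_left hc.1)) ?_ (fun _ _ => trivial)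
      (hzc.mono (Icc_subset_Icc_left hc.1)) ?_ (fun _ _ => trivial) hyz
    · intro t ht
      have ht' : t ∈ Icc a b := ⟨hc.1.trans ht.1, ht.2.le⟩
      simpa only [hv, hclamp t ht'] using (hy t ht').hasDerivWithinAt
    · intro t ht
      have ht' : t ∈ Icc a b := ⟨hc.1.trans ht.1, ht.2.le⟩
      simpa only [hv, hclamp t ht'] using (hz t ht').hasDerivWithinAt

set_option linter.unusedSectionVars false

/-- Local existence for a linear ODE, with radius locally uniform in the initial value. -/
lemma linear_ODE_local {I : Set ℝ} (hI : IsOpen I) {M : ℝ → E →L[ℝ] E}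
    (hM : ContinuousOn M I) {t : ℝ} (ht : t ∈ I) :
    ∃ ε > 0, Icc (t - 2*ε) (t + 2*ε) ⊆ I ∧
      ∀ t₁ ∈ Icc (t - ε) (t + ε), ∀ x₁ : E, ∃ z : ℝ → E, z t₁ = x₁ ∧
        ∀ u ∈ Icc (t₁ - ε) (t₁ + ε), HasDerivAt z (M u (z u)) u := by
  obtain ⟨δ, hδ, hball⟩ := Metric.isOpen_iff.mp hI t ht
  have hJI : Icc (t - δ/2) (t + δ/2) ⊆ I := by
    intro u hu
    apply hball
    rw [Real.ball_eq_Ioo]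
    constructor <;> [skip; skip] <;> nlinarith [hu.1, hu.2]
  obtain ⟨L, hL⟩ := (isCompact_Icc (a := t - δ/2) (b := t + δ/2)).exists_bound_of_continuousOn
    (hM.mono hJI)
  set L₀ : ℝ := max L 0 with hL₀
  have hL₀0 : 0 ≤ L₀ := le_max_right _ _
  have hLL : ∀ u ∈ Icc (t - δ/2) (t + δ/2), ‖M u‖ ≤ L₀ := fun u hu =>
    (hL u hu).trans (le_max_left _ _)
  set ε : ℝ := min (δ/8) (1/(4*(L₀+1))) with hε
  have hεpos : 0 < ε := lt_min (by linarith) (by positivity)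
  have hεδ : ε ≤ δ/8 := min_le_left _ _
  refine ⟨ε, hεpos, ?_, ?_⟩
  · intro u hu
    apply hJI
    constructor <;> simp only [mem_Icc] at hu <;> nlinarith
  intro t₁ ht₁ x₁
  set R : ℝ := ‖x₁‖ + 1 with hR
  set Cb : ℝ := (L₀+1)*(2*‖x₁‖+1) with hCb
  have hCbpos : 0 < Cb := by positivity
  set ε'' : ℝ := min (δ/4) (R / Cb) with hε''
  have hε''pos : 0 < ε'' := lt_min (by linarith) (by positivity)
  have hsubJ : Icc (t₁ - ε'') (t₁ + ε'') ⊆ Icc (t - δ/2) (t + δ/2) := by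
    intro u hu
    simp only [mem_Icc] at *
    have h1 : ε'' ≤ δ/4 := min_le_left _ _
    constructor <;> nlinarith [ht₁.1, ht₁.2, hu.1, hu.2]
  have ht₁mem : t₁ ∈ Icc (t₁ - ε'') (t₁ + ε'') := ⟨by linarith, by linarith⟩
  have hRpos : 0 < R := by positivity
  have hpl : IsPicardLindelof (fun u x => M u x) (⟨t₁, ht₁mem⟩ : Icc (t₁ - ε'') (t₁ + ε'')) x₁
      R.toNNReal 0 Cb.toNNReal (L₀+1).toNNReal := by
    constructor
    · intro u hu
      refine ((M u).lipschitz.weaken ?_).lipschitzOnWith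
      rw [← norm_toNNReal]
      exact Real.toNNReal_mono ((hLL u (hsubJ hu)).trans (by linarith))
    · intro x _
      exact ((hM.mono (hsubJ.trans hJI)).clm_apply continuousOn_const)
    · intro u hu x hx
      rw [Real.coe_toNNReal _ hRpos.le] at hx
      rw [Real.coe_toNNReal _ hCbpos.le]
      refine ((M u).le_opNorm x).trans ?_
      have h1 : ‖M u‖ ≤ L₀ := hLL u (hsubJ hu)
      have h2 : ‖x‖ ≤ 2*‖x₁‖+1 := by
        have h5 := norm_sub_norm_le x x₁
        have hx' : ‖x - x₁‖ ≤ R := by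
          rw [← dist_eq_norm]
          exact Metric.mem_closedBall.mp hx
        simp only [hR] at hx'
        linarith
      calc ‖M u‖ * ‖x‖ ≤ (L₀+1) * (2*‖x₁‖+1) := by nlinarith [norm_nonneg (M u), norm_nonneg x]
        _ = Cb := rfl
    · have h3 : t₁ + ε'' - t₁ = ε'' := by ring
      have h4 : t₁ - (t₁ - ε'') = ε'' := by ring
      simp only [NNReal.coe_zero, sub_zero, Real.coe_toNNReal _ hCbpos.le,
        Real.coe_toNNReal _ hRpos.le]
      rw [h3, h4, max_self, mul_comm]
      exact (le_div_iff₀ hCbpos).mp (min_le_right _ _)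
  obtain ⟨f, hf0, hf⟩ := hpl.exists_eq_forall_mem_Icc_hasDerivWithinAt₀
  refine ⟨f, hf0, ?_⟩
  intro u hu
  have hεε'' : ε < ε'' := by
    have h1 : 1/(2*(L₀+1)) ≤ R / Cb := by
      rw [div_le_div_iff₀ (by positivity) hCbpos]
      nlinarith [norm_nonneg x₁]
    have : min (δ/8) (1/(4*(L₀+1))) < min (δ/4) (1/(2*(L₀+1))) := by
      apply min_lt_min <;> [linarith; skip]
      rw [div_lt_div_iff₀ (by positivity) (by positivity)]
      nlinarith
    calc ε < min (δ/4) (1/(2*(L₀+1))) := this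
      _ ≤ ε'' := min_le_min le_rfl h1
  have huo : u ∈ Set.Ioo (t₁ - ε'') (t₁ + ε'') := by
    simp only [Set.mem_Icc, Set.mem_Ioo] at *
    constructor <;> nlinarith [hu.1, hu.2]
  exact (hf u (Set.Ioo_subset_Icc_self huo)).hasDerivAt (Icc_mem_nhds huo.1 huo.2)

/-- Gluing two solutions at a junction point. -/
lemma glue_sol {F : ℝ → E → E} {y z : ℝ → E} {a b t : ℝ} (hat : a ≤ t) (htb : t ≤ b)
    (hy : ∀ u ∈ Icc a t, HasDerivAt y (F u (y u)) u)
    (hz : ∀ u ∈ Icc t b, HasDerivAt z (F u (z u)) u)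
    (hyz : y t = z t) :
    ∀ u ∈ Icc a b, HasDerivAt (fun v => if v ≤ t then y v else z v)
      (F u (if u ≤ t then y u else z u)) u := by
  intro u hu
  set w : ℝ → E := fun v => if v ≤ t then y v else z v with hw
  rcases lt_trichotomy u t with hut | hut | hut
  · have heq : w =ᶠ[nhds u] y := by
      filter_upwards [Iio_mem_nhds hut] with v hv
      exact if_pos (le_of_lt hv)
    rw [if_pos hut.le]
    exact ((hy u ⟨hu.1, hut.le⟩).congr_of_eventuallyEq heq)
  · subst hut
    rw [if_pos le_rfl]
    have hleft : HasDerivWithinAt w (F u (y u)) (Iic u) u := by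
      refine ((hy u ⟨hu.1, le_rfl⟩).hasDerivWithinAt).congr (fun v hv => if_pos hv) (if_pos le_rfl)
    have hright : HasDerivWithinAt w (F u (y u)) (Ici u) u := by
      have h2 := (hz u ⟨le_rfl, hu.2⟩).hasDerivWithinAt (s := Ici u)
      rw [← hyz] at h2
      refine h2.congr (fun v hv => ?_) ?_
      · by_cases hvt : v ≤ u
        · have hvu : v = u := le_antisymm hvt hv
          show (if v ≤ u then y v else z v) = z v
          rw [if_pos hvt, hvu]
          exact hyz
        · exact if_neg hvt
      · show (if u ≤ u then y u else z u) = z u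
        rw [if_pos le_rfl]
        exact hyz
    have h3 := hleft.union hright
    rwa [Iic_union_Ici, hasDerivWithinAt_univ] at h3
  · have heq : w =ᶠ[nhds u] z := by
      filter_upwards [Ioi_mem_nhds hut] with v hv
      exact if_neg (not_le.mpr hv)
    rw [if_neg (not_le.mpr hut)]
    exact ((hz u ⟨hut.le, hu.2⟩).congr_of_eventuallyEq heq)

/-- Extending a solution from `t₀` through a local solution centered at `c`. -/
lemma linear_ODE_step {I : Set ℝ} (hIconn : I.OrdConnected) {M : ℝ → E →L[ℝ] E}
    (hM : ContinuousOn M I) {t₀ : ℝ} (ht₀ : t₀ ∈ I) {x₀ : E} {c ε : ℝ} (hε : 0 < ε)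
    (hsub : Icc (c - ε) (c + ε) ⊆ I)
    {y : ℝ → E} (hy0 : y t₀ = x₀) (hy : ∀ u ∈ uIcc t₀ c, HasDerivAt y (M u (y u)) u)
    {z : ℝ → E} (hz0 : z c = y c) (hz : ∀ u ∈ Icc (c - ε) (c + ε), HasDerivAt z (M u (z u)) u)
    {t' : ℝ} (ht' : t' ∈ Icc (c - ε) (c + ε)) :
    ∃ w : ℝ → E, w t₀ = x₀ ∧ ∀ u ∈ uIcc t₀ t', HasDerivAt w (M u (w u)) u := by
  have hcI : c ∈ I := hsub ⟨by linarith, by linarith⟩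
  have huIccI : uIcc t₀ c ⊆ I := hIconn.uIcc_subset ht₀ hcI
  rcases le_or_gt t₀ (c - ε) with hB | hA'
  · -- t₀ ≤ c - ε : glue y on [t₀, c] with z on [c, c + ε]
    have ht₀c : t₀ ≤ c := by linarith
    have huI : uIcc t₀ c = Icc t₀ c := uIcc_of_le ht₀c
    refine ⟨fun v => if v ≤ c then y v else z v, by beta_reduce; rw [if_pos ht₀c]; exact hy0, ?_⟩
    have hglue := glue_sol (E := E) (F := fun u x => M u x) ht₀c (by linarith : c ≤ c + ε)
      (fun u hu => hy u (huI ▸ hu)) (fun u hu => hz u ⟨by linarith [hu.1], hu.2⟩) hz0.symm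
    intro u hu
    have hu' : u ∈ Icc t₀ (c + ε) := by
      have h1 : uIcc t₀ t' ⊆ Icc t₀ (c + ε) := by
        rw [← uIcc_of_le (by linarith : t₀ ≤ c + ε)]
        exact uIcc_subset_uIcc left_mem_uIcc (mem_uIcc.mpr (Or.inl ⟨by linarith [ht'.1], ht'.2⟩))
      exact h1 hu
    simpa using hglue u hu'
  rcases le_or_gt (c + ε) t₀ with hD | hA''
  · -- c + ε ≤ t₀ : glue z on [c - ε, c] with y on [c, t₀]
    have hct₀ : c ≤ t₀ := by linarith
    have huI : uIcc t₀ c = Icc c t₀ := by rw [uIcc_comm]; exact uIcc_of_le hct₀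
    refine ⟨fun v => if v ≤ c then z v else y v, ?_, ?_⟩
    · beta_reduce
      rw [if_neg (not_le.mpr (by linarith : c < t₀))]
      exact hy0
    have hglue := glue_sol (E := E) (F := fun u x => M u x) (by linarith : c - ε ≤ c) hct₀
      (fun u hu => hz u ⟨hu.1, by linarith [hu.2]⟩) (fun u hu => hy u (huI ▸ hu)) hz0
    intro u hu
    have hu' : u ∈ Icc (c - ε) t₀ := by
      have h1 : uIcc t₀ t' ⊆ Icc (c - ε) t₀ := by
        rw [← uIcc_of_le (by linarith : c - ε ≤ t₀), uIcc_comm]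
        exact uIcc_subset_uIcc (mem_uIcc.mpr (Or.inl ⟨ht'.1, by linarith [ht'.2]⟩)) right_mem_uIcc
      exact h1 hu
    simpa using hglue u hu'
  · -- c - ε < t₀ < c + ε : z already passes through (t₀, x₀)
    have hsub2 : uIcc t₀ c ⊆ Icc (c - ε) (c + ε) := by
      rw [← uIcc_of_le (by linarith : c - ε ≤ c + ε)]
      exact uIcc_subset_uIcc (mem_uIcc.mpr (Or.inl ⟨by linarith, by linarith⟩))
        (mem_uIcc.mpr (Or.inl ⟨by linarith, by linarith⟩))
    have hequ : EqOn y z (uIcc t₀ c) := by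
      rw [uIcc]
      refine linear_ODE_unique (M := M) min_le_max (c := c) ?_ (hM.mono ?_)
        (fun u hu => hy u hu) (fun u hu => hz u (hsub2 hu)) hz0.symm
      · exact ⟨min_le_right _ _, le_max_right _ _⟩
      · exact huIccI
    refine ⟨z, ?_, ?_⟩
    · rw [← hequ left_mem_uIcc, hy0]
    · intro u hu
      refine hz u ?_
      have h1 : uIcc t₀ t' ⊆ Icc (c - ε) (c + ε) := by
        rw [← uIcc_of_le (by linarith : c - ε ≤ c + ε)]
        exact uIcc_subset_uIcc (mem_uIcc.mpr (Or.inl ⟨by linarith, by linarith⟩))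
          (mem_uIcc.mpr (Or.inl ⟨ht'.1, ht'.2⟩))
      exact h1 hu

/-- Global existence and uniqueness for a linear ODE on an open order-connected set. -/
theorem linear_ODE_global {I : Set ℝ} (hIopen : IsOpen I) (hIconn : I.OrdConnected)
    {M : ℝ → E →L[ℝ] E} (hM : ContinuousOn M I) {t₀ : ℝ} (ht₀ : t₀ ∈ I) (x₀ : E) :
    ∃ Y : ℝ → E, Y t₀ = x₀ ∧ ∀ u ∈ I, HasDerivAt Y (M u (Y u)) u := by
  classical
  set P : ℝ → Prop := fun t => ∃ y : ℝ → E, y t₀ = x₀ ∧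
    ∀ u ∈ uIcc t₀ t, HasDerivAt y (M u (y u)) u with hP
  set S : Set ℝ := {t | t ∈ I ∧ P t} with hS
  -- S is open
  have hSopen : IsOpen S := by
    rw [Metric.isOpen_iff]
    rintro t ⟨htI, y, hy0, hy⟩
    obtain ⟨ε, hε, hsub2, hloc⟩ := linear_ODE_local hIopen hM htI
    obtain ⟨z, hz0, hz⟩ := hloc t ⟨by linarith, by linarith⟩ (y t)
    refine ⟨ε, hε, fun t' ht' => ?_⟩
    rw [mem_ball, Real.dist_eq, abs_sub_lt_iff] at ht'
    have ht'm : t' ∈ Icc (t - ε) (t + ε) := ⟨by linarith [ht'.1, ht'.2], by linarith [ht'.1]⟩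
    have hsub1 : Icc (t - ε) (t + ε) ⊆ I := fun u hu =>
      hsub2 ⟨by linarith [hu.1], by linarith [hu.2]⟩
    obtain ⟨w, hw0, hw⟩ := linear_ODE_step hIconn hM ht₀ hε hsub1 hy0 hy hz0 hz ht'm
    exact ⟨hsub1 ht'm, w, hw0, hw⟩
  -- closure S ∩ I ⊆ S
  have hSclosed : closure S ∩ I ⊆ S := by
    rintro t ⟨htc, htI⟩
    obtain ⟨ε, hε, hsub2, hloc⟩ := linear_ODE_local hIopen hM htI
    obtain ⟨c, hcS, hct⟩ := Metric.mem_closure_iff.mp htc ε hε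
    obtain ⟨hcI, y, hy0, hy⟩ := hcS
    rw [Real.dist_eq, abs_sub_lt_iff] at hct
    have hcm : c ∈ Icc (t - ε) (t + ε) := ⟨by linarith [hct.1], by linarith [hct.2]⟩
    obtain ⟨z, hz0, hz⟩ := hloc c hcm (y c)
    have hsubc : Icc (c - ε) (c + ε) ⊆ I := fun u hu => by
      refine hsub2 ⟨?_, ?_⟩ <;> simp only [mem_Icc] at hu <;>
        [nlinarith [hu.1, hcm.1]; nlinarith [hu.2, hcm.2]]
    have htm : t ∈ Icc (c - ε) (c + ε) := ⟨by linarith [hct.2], by linarith [hct.1]⟩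
    obtain ⟨w, hw0, hw⟩ := linear_ODE_step hIconn hM ht₀ hε hsubc hy0 hy hz0 hz htm
    exact ⟨htI, w, hw0, hw⟩
  -- S is nonempty
  have ht₀S : t₀ ∈ S := by
    obtain ⟨ε, hε, hsub2, hloc⟩ := linear_ODE_local hIopen hM ht₀
    obtain ⟨z, hz0, hz⟩ := hloc t₀ ⟨by linarith, by linarith⟩ x₀
    refine ⟨ht₀, z, hz0, fun u hu => ?_⟩
    rw [uIcc_self, mem_singleton_iff] at hu
    subst hu
    exact hz u ⟨by linarith, by linarith⟩
  -- S = I by preconnectedness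
  have hIS : ∀ t ∈ I, P t := by
    have := hIconn.isPreconnected.subset_of_closure_inter_subset hSopen
      ⟨t₀, ht₀, ht₀S⟩ hSclosed
    exact fun t ht => (this ht).2
  -- the global solution
  set Y : ℝ → E := fun u => if hu : u ∈ I then (hIS u hu).choose u else x₀ with hY
  have hcons : ∀ t (ht : t ∈ I), ∀ u ∈ uIcc t₀ t, Y u = (hIS t ht).choose u := by
    intro t ht u hu
    have huI : u ∈ I := hIconn.uIcc_subset ht₀ ht hu
    obtain ⟨hu0, hud⟩ := (hIS u huI).choose_spec
    obtain ⟨ht0, htd⟩ := (hIS t ht).choose_spec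
    have hYu : Y u = (hIS u huI).choose u := dif_pos huI
    rw [hYu]
    have hsubu : uIcc t₀ u ⊆ uIcc t₀ t := uIcc_subset_uIcc left_mem_uIcc hu
    have huIccI : uIcc t₀ u ⊆ I := hIconn.uIcc_subset ht₀ huI
    have := linear_ODE_unique (M := M) (a := min t₀ u) (b := max t₀ u) (c := t₀)
      min_le_max ⟨min_le_left _ _, le_max_left _ _⟩ (hM.mono huIccI)
      (fun v hv => hud v hv) (fun v hv => htd v (hsubu hv)) (by rw [hu0, ht0])
    exact this right_mem_uIcc
  have hY0 : Y t₀ = x₀ := by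
    rw [hY]
    simp only [dif_pos ht₀]
    exact (hIS t₀ ht₀).choose_spec.1
  refine ⟨Y, hY0, ?_⟩
  intro t ht
  obtain ⟨η, hη, hball⟩ := Metric.isOpen_iff.mp hIopen t ht
  rcases lt_trichotomy t t₀ with htt | htt | htt
  · -- t < t₀
    obtain ⟨b', hb'⟩ : ∃ x : ℝ, x = t - η/2 := ⟨_, rfl⟩
    have hb'I : b' ∈ I := hball (by rw [mem_ball, Real.dist_eq]; rw [hb']; rw [abs_of_nonpos] <;> linarith)
    obtain ⟨hb0, hbd⟩ := (hIS b' hb'I).choose_spec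
    have hmem : t ∈ Ioo b' t₀ := ⟨by linarith, htt⟩
    have hsubIoo : Ioo b' t₀ ⊆ uIcc t₀ b' := by
      rw [uIcc_comm, uIcc_of_le (by linarith : b' ≤ t₀)]
      exact Ioo_subset_Icc_self
    have heq : Y =ᶠ[nhds t] (hIS b' hb'I).choose := by
      filter_upwards [isOpen_Ioo.mem_nhds hmem] with v hv
      exact hcons b' hb'I v (hsubIoo hv)
    have hYt : Y t = (hIS b' hb'I).choose t := hcons b' hb'I t (hsubIoo hmem)
    have := (hbd t (hsubIoo hmem)).congr_of_eventuallyEq heq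
    rwa [← hYt] at this
  · -- t = t₀
    subst htt
    obtain ⟨a', ha'⟩ : ∃ x : ℝ, x = t - η/2 := ⟨_, rfl⟩
    obtain ⟨b', hb'⟩ : ∃ x : ℝ, x = t + η/2 := ⟨_, rfl⟩
    have ha'I : a' ∈ I := hball (by rw [mem_ball, Real.dist_eq, ha', abs_of_nonpos] <;> linarith)
    have hb'I : b' ∈ I := hball (by rw [mem_ball, Real.dist_eq, hb', abs_of_nonneg] <;> linarith)
    obtain ⟨ha0, had⟩ := (hIS a' ha'I).choose_spec
    obtain ⟨hb0, hbd⟩ := (hIS b' hb'I).choose_spec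
    have huIa : uIcc t a' = Icc a' t := by rw [uIcc_comm]; exact uIcc_of_le (by linarith)
    have huIb : uIcc t b' = Icc t b' := uIcc_of_le (by linarith)
    have hleft : HasDerivWithinAt Y (M t (Y t)) (Iic t) t := by
      have h1 := (had t (by rw [huIa]; exact ⟨by linarith, le_rfl⟩)).hasDerivWithinAt (s := Iic t)
      have heq : Y =ᶠ[nhdsWithin t (Iic t)] (hIS a' ha'I).choose := by
        filter_upwards [Icc_mem_nhdsLE_of_mem (⟨by linarith, le_rfl⟩ : t ∈ Ioc a' t)] with v hv
        exact hcons a' ha'I v (by rw [huIa]; exact hv)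
      have hYt : Y t = (hIS a' ha'I).choose t := hcons a' ha'I t (by rw [huIa]; exact ⟨by linarith, le_rfl⟩)
      have := h1.congr_of_eventuallyEq heq hYt
      rwa [← hYt] at this
    have hright : HasDerivWithinAt Y (M t (Y t)) (Ici t) t := by
      have h1 := (hbd t (by rw [huIb]; exact ⟨le_rfl, by linarith⟩)).hasDerivWithinAt (s := Ici t)
      have heq : Y =ᶠ[nhdsWithin t (Ici t)] (hIS b' hb'I).choose := by
        filter_upwards [Icc_mem_nhdsGE_of_mem (⟨le_rfl, by linarith⟩ : t ∈ Ico t b')] with v hv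
        exact hcons b' hb'I v (by rw [huIb]; exact hv)
      have hYt : Y t = (hIS b' hb'I).choose t := hcons b' hb'I t (by rw [huIb]; exact ⟨le_rfl, by linarith⟩)
      have := h1.congr_of_eventuallyEq heq hYt
      rwa [← hYt] at this
    have h3 := hleft.union hright
    rwa [Iic_union_Ici, hasDerivWithinAt_univ] at h3
  · -- t₀ < t
    obtain ⟨b', hb'⟩ : ∃ x : ℝ, x = t + η/2 := ⟨_, rfl⟩
    have hb'I : b' ∈ I := hball (by rw [mem_ball, Real.dist_eq, hb', abs_of_nonneg] <;> linarith)
    obtain ⟨hb0, hbd⟩ := (hIS b' hb'I).choose_spec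
    have hmem : t ∈ Ioo t₀ b' := ⟨htt, by linarith⟩
    have hsubIoo : Ioo t₀ b' ⊆ uIcc t₀ b' := by
      rw [uIcc_of_le (by linarith : t₀ ≤ b')]
      exact Ioo_subset_Icc_self
    have heq : Y =ᶠ[nhds t] (hIS b' hb'I).choose := by
      filter_upwards [isOpen_Ioo.mem_nhds hmem] with v hv
      exact hcons b' hb'I v (hsubIoo hv)
    have hYt : Y t = (hIS b' hb'I).choose t := hcons b' hb'I t (hsubIoo hmem)
    have := (hbd t (hsubIoo hmem)).congr_of_eventuallyEq heq
    rwa [← hYt] at this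

end LinearODE

variable {n : ℕ}

lemma hasDerivAt_matrix {f : ℝ → Matrix (Fin n) (Fin n) ℂ} {f' : Matrix (Fin n) (Fin n) ℂ} {s : ℝ} :
    HasDerivAt f f' s ↔ ∀ i j, HasDerivAt (fun u => f u i j) (f' i j) s := by
  refine (hasDerivAt_pi (φ := f) (φ' := f')).trans ?_
  refine forall_congr' fun i => ?_
  exact hasDerivAt_pi

lemma HasDerivAt.matMul {f g : ℝ → Matrix (Fin n) (Fin n) ℂ} {f' g' : Matrix (Fin n) (Fin n) ℂ}
    {s : ℝ} (hf : HasDerivAt f f' s) (hg : HasDerivAt g g' s) :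
    HasDerivAt (fun u => f u * g u) (f' * g s + f s * g') s := by
  rw [hasDerivAt_matrix] at *
  intro i j
  simp only [Matrix.mul_apply, Matrix.add_apply]
  have : ∀ k (_ : k ∈ Finset.univ), HasDerivAt (fun u => f u i k * g u k j)
      (f' i k * g s k j + f s i k * g' k j) s := fun k _ => (hf i k).mul (hg k j)
  have h2 := HasDerivAt.fun_sum this
  simpa [Finset.sum_add_distrib] using h2

lemma HasDerivAt.matTranspose {f : ℝ → Matrix (Fin n) (Fin n) ℂ} {f' : Matrix (Fin n) (Fin n) ℂ}
    {s : ℝ} (hf : HasDerivAt f f' s) : HasDerivAt (fun u => (f u)ᵀ) f'ᵀ s := by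
  rw [hasDerivAt_matrix] at *
  intro i j
  exact hf j i

lemma HasDerivAt.matConj {f : ℝ → Matrix (Fin n) (Fin n) ℂ} {f' : Matrix (Fin n) (Fin n) ℂ}
    {s : ℝ} (hf : HasDerivAt f f' s) :
    HasDerivAt (fun u => (f u).map (starRingEnd ℂ)) (f'.map (starRingEnd ℂ)) s := by
  rw [hasDerivAt_matrix] at *
  intro i j
  simp only [Matrix.map_apply]
  have h2 := ((Complex.conjCLE : ℂ ≃L[ℝ] ℂ)).toContinuousLinearMap.hasFDerivAt.comp_hasDerivAt s (hf i j)
  exact (hf i j).star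

lemma HasDerivAt.matNeg {f : ℝ → Matrix (Fin n) (Fin n) ℂ} {f' : Matrix (Fin n) (Fin n) ℂ}
    {s : ℝ} (hf : HasDerivAt f f' s) : HasDerivAt (fun u => -(f u)) (-f') s := hf.neg

lemma differentiableAt_matrix {f : ℝ → Matrix (Fin n) (Fin n) ℂ} {s : ℝ}
    (h : ∀ i j, DifferentiableAt ℝ (fun u => f u i j) s) : DifferentiableAt ℝ f s := by
  obtain ⟨g, hg⟩ : ∃ g : Matrix (Fin n) (Fin n) ℂ, ∀ i j,
      HasDerivAt (fun u => f u i j) (g i j) s :=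
    ⟨Matrix.of fun i j => deriv (fun u => f u i j) s, fun i j => (h i j).hasDerivAt⟩
  exact (hasDerivAt_matrix.mpr hg).differentiableAt

lemma differentiableAt_det {f : ℝ → Matrix (Fin n) (Fin n) ℂ} {s : ℝ}
    (h : ∀ i j, DifferentiableAt ℝ (fun u => f u i j) s) :
    DifferentiableAt ℝ (fun u => (f u).det) s := by
  have : (fun u => (f u).det) = fun u => ∑ σ : Equiv.Perm (Fin n),
      (Equiv.Perm.sign σ : ℤ) • ∏ i, f u (σ i) i := by
    funext u
    rw [Matrix.det_apply]
    congr 1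
  rw [this]
  refine DifferentiableAt.fun_sum fun σ _ => DifferentiableAt.const_smul ?_ _
  exact (HasDerivAt.fun_finsetProd (u := Finset.univ) (f := fun i u => f u (σ i) i)
    (f' := fun i => deriv (fun u => f u (σ i) i) s)
    (fun i _ => (h (σ i) i).hasDerivAt)).differentiableAt

lemma differentiableAt_matinv {f : ℝ → Matrix (Fin n) (Fin n) ℂ} {s : ℝ}
    (h : DifferentiableAt ℝ f s) (hdet : (f s).det ≠ 0) :
    DifferentiableAt ℝ (fun u => (f u)⁻¹) s := by
  have hentry : ∀ i j, DifferentiableAt ℝ (fun u => f u i j) s := fun i j =>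
    (hasDerivAt_matrix.mp h.hasDerivAt i j).differentiableAt
  have hdet' : DifferentiableAt ℝ (fun u => (f u).det) s := differentiableAt_det hentry
  have hadj : ∀ i j, DifferentiableAt ℝ (fun u => (f u).adjugate i j) s := by
    intro i j
    simp only [Matrix.adjugate_apply]
    refine differentiableAt_det ?_
    intro i' k
    simp only [Matrix.updateRow_apply]
    split_ifs
    · exact differentiableAt_const _
    · exact hentry i' k
  have heq : (fun u => (f u)⁻¹) = fun u => ((f u).det)⁻¹ • (f u).adjugate := by
    funext u
    rw [Matrix.inv_def, Ring.inverse_eq_inv']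
  rw [heq]
  exact (hdet'.inv hdet).smul (differentiableAt_matrix hadj)

lemma matrix_norm_mul_le (X Y : Matrix (Fin n) (Fin n) ℂ) : ‖X * Y‖ ≤ n * ‖X‖ * ‖Y‖ := by
  rw [Matrix.norm_le_iff (by positivity)]
  intro i j
  rw [Matrix.mul_apply]
  calc ‖∑ k, X i k * Y k j‖ ≤ ∑ k, ‖X i k * Y k j‖ := norm_sum_le _ _
    _ ≤ ∑ _k : Fin n, ‖X‖ * ‖Y‖ := by
        refine Finset.sum_le_sum fun k _ => ?_
        rw [norm_mul]
        exact mul_le_mul (Matrix.norm_entry_le_entrywise_sup_norm X)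
          (Matrix.norm_entry_le_entrywise_sup_norm Y) (norm_nonneg _) (norm_nonneg _)
    _ = n * ‖X‖ * ‖Y‖ := by
        rw [Finset.sum_const, Finset.card_univ, Fintype.card_fin, nsmul_eq_mul]; ring

lemma const_on_of_deriv_zero {I : Set ℝ} (hIconn : I.OrdConnected)
    {f : ℝ → Matrix (Fin n) (Fin n) ℂ}
    (hf : ∀ u ∈ I, HasDerivAt f 0 u) {a b : ℝ} (ha : a ∈ I) (hb : b ∈ I) : f a = f b := by
  have main : ∀ a b : ℝ, a ∈ I → b ∈ I → a ≤ b → f b = f a := by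
    intro a b ha hb hab
    have hsub : Icc a b ⊆ I := hIconn.out ha hb
    exact constant_of_has_deriv_right_zero
      (fun u hu => (hf u (hsub hu)).continuousAt.continuousWithinAt)
      (fun u hu => (hf u (hsub (Ico_subset_Icc_self hu))).hasDerivWithinAt)
      b (right_mem_Icc.mpr hab)
  rcases le_total a b with h | h
  · exact (main a b ha hb h).symm
  · exact main b a hb ha h

lemma conj_dot (x y : Fin n → ℂ) : (starRingEnd ℂ) (star x ⬝ᵥ y) = star y ⬝ᵥ x := by
  simp only [dotProduct, map_sum, Pi.star_apply, Complex.star_def, _root_.map_mul,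
    Complex.conj_conj]
  exact Finset.sum_congr rfl fun i _ => mul_comm _ _

lemma conjT_mulVec (M : Matrix (Fin n) (Fin n) ℂ) (w u : Fin n → ℂ) :
    star w ⬝ᵥ ((M.map (starRingEnd ℂ))ᵀ *ᵥ u) = star (M *ᵥ w) ⬝ᵥ u := by
  simp only [dotProduct, mulVec, Pi.star_apply, Complex.star_def, Matrix.transpose_apply,
    Matrix.map_apply, Finset.mul_sum, map_sum, _root_.map_mul, Finset.sum_mul]
  rw [Finset.sum_comm]
  exact Finset.sum_congr rfl fun j _ => Finset.sum_congr rfl fun i _ => by ring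
lemma posdef_complex_quad {P : Matrix (Fin n) (Fin n) ℂ} (hsymm : P.IsSymm)
    (hpos : (P.map Complex.im).PosDef) {v : Fin n → ℂ} (hv : v ≠ 0) :
    0 < (star v ⬝ᵥ (P *ᵥ v)).im := by
  set a : Fin n → ℝ := fun i => (v i).re with ha
  set b : Fin n → ℝ := fun i => (v i).im with hb
  have hPsym : ∀ i j, P i j = P j i := by
    intro i j
    conv_rhs => rw [← hsymm]
    rfl
  have key : (star v ⬝ᵥ (P *ᵥ v)).im
      = (∑ i, ∑ j, ((a i * a j + b i * b j) * (P i j).im))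
        + (∑ i, ∑ j, ((a i * b j - b i * a j) * (P i j).re)) := by
    simp only [dotProduct, mulVec, Pi.star_apply, Complex.star_def, Finset.mul_sum,
      Complex.im_sum]
    rw [← Finset.sum_add_distrib]
    refine Finset.sum_congr rfl fun i _ => ?_
    rw [← Finset.sum_add_distrib]
    refine Finset.sum_congr rfl fun j _ => ?_
    simp only [Complex.mul_im, Complex.mul_re, Complex.conj_re, Complex.conj_im, ha, hb]
    ring
  have hcross : (∑ i, ∑ j, ((a i * b j - b i * a j) * (P i j).re)) = 0 := by
    have h1 : (∑ i, ∑ j, ((a i * b j - b i * a j) * (P i j).re))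
        = (∑ i, ∑ j, (a i * b j * (P i j).re)) - (∑ i, ∑ j, (b i * a j * (P i j).re)) := by
      rw [← Finset.sum_sub_distrib]
      refine Finset.sum_congr rfl fun i _ => ?_
      rw [← Finset.sum_sub_distrib]
      exact Finset.sum_congr rfl fun j _ => by ring
    rw [h1, sub_eq_zero]
    rw [Finset.sum_comm]
    refine Finset.sum_congr rfl fun i _ => Finset.sum_congr rfl fun j _ => ?_
    rw [hPsym i j]
    ring
  have hsplit : (∑ i, ∑ j, ((a i * a j + b i * b j) * (P i j).im))
      = a ⬝ᵥ ((P.map Complex.im) *ᵥ a) + b ⬝ᵥ ((P.map Complex.im) *ᵥ b) := by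
    simp only [dotProduct, mulVec, Matrix.map_apply, Finset.mul_sum]
    rw [← Finset.sum_add_distrib]
    refine Finset.sum_congr rfl fun i _ => ?_
    rw [← Finset.sum_add_distrib]
    exact Finset.sum_congr rfl fun j _ => by ring
  rw [key, hcross, add_zero, hsplit]
  have hab : a ≠ 0 ∨ b ≠ 0 := by
    by_contra hcon
    push_neg at hcon
    apply hv
    funext i
    have h1 : a i = 0 := by rw [hcon.1]; rfl
    have h2 : b i = 0 := by rw [hcon.2]; rfl
    exact Complex.ext h1 h2
  have hsa : (0:ℝ) ≤ a ⬝ᵥ ((P.map Complex.im) *ᵥ a) := by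
    rcases eq_or_ne a 0 with h | h
    · simp [h]
    · have := hpos.dotProduct_mulVec_pos h
      simpa using this.le
  have hsb : (0:ℝ) ≤ b ⬝ᵥ ((P.map Complex.im) *ᵥ b) := by
    rcases eq_or_ne b 0 with h | h
    · simp [h]
    · have := hpos.dotProduct_mulVec_pos h
      simpa using this.le
  rcases hab with h | h
  · have := hpos.dotProduct_mulVec_pos h
    simp only [star_trivial] at this
    linarith
  · have := hpos.dotProduct_mulVec_pos h
    simp only [star_trivial] at this
    linarith
variable (n) in
/-- The constant part `(A, B) ↦ (C B, 0)` of the linearised vector field. -/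
noncomputable def riccA : (Matrix (Fin n) (Fin n) ℂ × Matrix (Fin n) (Fin n) ℂ) →L[ℝ]
    (Matrix (Fin n) (Fin n) ℂ × Matrix (Fin n) (Fin n) ℂ) :=
  LinearMap.toContinuousLinearMap
    { toFun := fun p => (riccatiC n * p.2, 0)
      map_add' := fun p q => by
        simp only [Prod.snd_add, mul_add, Prod.mk_add_mk, add_zero]
      map_smul' := fun c p => by
        simp only [Prod.smul_snd, Matrix.mul_smul, RingHom.id_apply, Prod.smul_mk, smul_zero] }

variable (n) in
/-- The `D`-dependent part `(A, B) ↦ (0, -D A)` of the linearised vector field. -/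
noncomputable def riccB : Matrix (Fin n) (Fin n) ℝ →ₗ[ℝ]
    ((Matrix (Fin n) (Fin n) ℂ × Matrix (Fin n) (Fin n) ℂ) →L[ℝ]
      (Matrix (Fin n) (Fin n) ℂ × Matrix (Fin n) (Fin n) ℂ)) where
  toFun P := LinearMap.toContinuousLinearMap
    { toFun := fun p => (0, -(P.map (fun x : ℝ => (x : ℂ))) * p.1)
      map_add' := fun p q => by
        simp only [Prod.fst_add, mul_add, Prod.mk_add_mk, add_zero]
      map_smul' := fun c p => by
        simp only [Prod.smul_fst, Matrix.mul_smul, RingHom.id_apply, Prod.smul_mk, smul_zero] }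
  map_add' P Q := by
    apply ContinuousLinearMap.ext
    intro p
    simp only [LinearMap.coe_toContinuousLinearMap', LinearMap.coe_mk, AddHom.coe_mk,
      ContinuousLinearMap.add_apply, Prod.mk_add_mk, add_zero]
    rw [Prod.mk.injEq]
    refine ⟨rfl, ?_⟩
    have h2 : ((P + Q)).map (fun x : ℝ => (x : ℂ))
        = P.map (fun x : ℝ => (x : ℂ)) + Q.map (fun x : ℝ => (x : ℂ)) := by
      ext i j
      simp [Matrix.map_apply]
    rw [h2, neg_add, add_mul]
  map_smul' c P := by
    apply ContinuousLinearMap.ext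
    intro p
    simp only [LinearMap.coe_toContinuousLinearMap', LinearMap.coe_mk, AddHom.coe_mk,
      RingHom.id_apply, ContinuousLinearMap.smul_apply, Prod.smul_mk, smul_zero]
    rw [Prod.mk.injEq]
    refine ⟨rfl, ?_⟩
    have h2 : ((c • P)).map (fun x : ℝ => (x : ℂ)) = c • (P.map (fun x : ℝ => (x : ℂ))) := by
      ext i j
      simp [Matrix.map_apply, Complex.real_smul]
    rw [h2, ← smul_neg, Matrix.smul_mul]

lemma riccM_apply (P : Matrix (Fin n) (Fin n) ℝ)
    (p : Matrix (Fin n) (Fin n) ℂ × Matrix (Fin n) (Fin n) ℂ) :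
    (riccA n + riccB n P) p
      = (riccatiC n * p.2, -(P.map (fun x : ℝ => (x : ℂ))) * p.1) := by
  simp only [ContinuousLinearMap.add_apply, riccA, riccB, LinearMap.coe_mk, AddHom.coe_mk,
    LinearMap.coe_toContinuousLinearMap', Prod.mk_add_mk, add_zero, zero_add]
lemma riccatiC_symm : (riccatiC n).IsSymm := by
  unfold Matrix.IsSymm
  ext i j
  simp only [Matrix.transpose_apply, riccatiC, Matrix.of_apply]
  by_cases h : i = j
  · subst h; rfl
  · rw [if_neg (by tauto), if_neg (by tauto)]

lemma riccatiC_real : (riccatiC n).map (starRingEnd ℂ) = riccatiC n := by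
  ext i j
  simp only [Matrix.map_apply, riccatiC, Matrix.of_apply]
  split_ifs <;> simp [map_ofNat]

theorem riccati_exists {I : Set ℝ} (hIopen : IsOpen I) (hIconn : I.OrdConnected)
    {D : ℝ → Matrix (Fin n) (Fin n) ℝ} (hDcont : ContinuousOn D I)
    (hDsymm : ∀ s ∈ I, (D s).IsSymm)
    {s₀ : ℝ} (hs₀ : s₀ ∈ I)
    {H₀ : Matrix (Fin n) (Fin n) ℂ} (hH₀symm : H₀.IsSymm)
    (hH₀pos : (H₀.map Complex.im).PosDef) :
    ∃ H : ℝ → Matrix (Fin n) (Fin n) ℂ, H s₀ = H₀ ∧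
      (∀ s ∈ I, HasDerivAt H (-(H s * riccatiC n * H s + (D s).map (fun x => (x : ℂ)))) s) ∧
      ∀ s ∈ I, (H s).IsSymm ∧ ((H s).map Complex.im).PosDef := by
  classical
  have hDmsymm : ∀ s ∈ I, ((D s).map (fun x : ℝ => (x : ℂ)))ᵀ = (D s).map (fun x : ℝ => (x : ℂ)) := by
    intro s hs
    rw [← Matrix.transpose_map, (hDsymm s hs).eq]
  have hDmconj : ∀ s, ((D s).map (fun x : ℝ => (x : ℂ))).map (starRingEnd ℂ)
      = (D s).map (fun x : ℝ => (x : ℂ)) := by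
    intro s
    ext i j
    simp [Matrix.map_apply, Complex.conj_ofReal]
  have hMcont : ContinuousOn (fun s => riccA n + riccB n (D s)) I :=
    continuousOn_const.add (((riccB n).continuous_of_finiteDimensional).comp_continuousOn hDcont)
  obtain ⟨Y, hY0, hYd⟩ := linear_ODE_global hIopen hIconn hMcont hs₀
    ((1 : Matrix (Fin n) (Fin n) ℂ), H₀)
  set A : ℝ → Matrix (Fin n) (Fin n) ℂ := fun u => (Y u).1 with hA'
  set B : ℝ → Matrix (Fin n) (Fin n) ℂ := fun u => (Y u).2 with hB'
  have hA0 : A s₀ = 1 := by show (Y s₀).1 = 1; rw [hY0]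
  have hB0 : B s₀ = H₀ := by show (Y s₀).2 = H₀; rw [hY0]
  have hAd : ∀ u ∈ I, HasDerivAt A (riccatiC n * B u) u := by
    intro u hu
    have h1 := (ContinuousLinearMap.fst ℝ (Matrix (Fin n) (Fin n) ℂ)
      (Matrix (Fin n) (Fin n) ℂ)).hasFDerivAt.comp_hasDerivAt u (hYd u hu)
    exact h1.congr_deriv (congrArg Prod.fst (riccM_apply (D u) (Y u)))
  have hBd : ∀ u ∈ I, HasDerivAt B (-((D u).map (fun x : ℝ => (x : ℂ))) * A u) u := by
    intro u hu
    have h1 := (ContinuousLinearMap.snd ℝ (Matrix (Fin n) (Fin n) ℂ)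
      (Matrix (Fin n) (Fin n) ℂ)).hasFDerivAt.comp_hasDerivAt u (hYd u hu)
    exact h1.congr_deriv (congrArg Prod.snd (riccM_apply (D u) (Y u)))
  -- the symplectic-type invariants
  have hginv : ∀ s ∈ I, (B s)ᵀ * A s - (A s)ᵀ * B s = H₀ᵀ - H₀ := by
    intro s hs
    have hconst := const_on_of_deriv_zero hIconn (f := fun u => (B u)ᵀ * A u - (A u)ᵀ * B u)
      ?_ hs hs₀
    · beta_reduce at hconst
      rw [hconst, hA0, hB0, Matrix.transpose_one, Matrix.mul_one, Matrix.one_mul]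
    intro u hu
    have hd := (((hBd u hu).matTranspose.matMul (hAd u hu)).sub
      (((hAd u hu).matTranspose.matMul (hBd u hu))))
    have hval : ((-((D u).map (fun x : ℝ => (x : ℂ))) * A u)ᵀ * A u + (B u)ᵀ * (riccatiC n * B u))
        - ((riccatiC n * B u)ᵀ * B u + (A u)ᵀ * (-((D u).map (fun x : ℝ => (x : ℂ))) * A u))
        = 0 := by
      rw [Matrix.transpose_mul, Matrix.transpose_mul, Matrix.transpose_neg,
        hDmsymm u hu, riccatiC_symm.eq]
      simp only [Matrix.neg_mul, Matrix.mul_neg, Matrix.mul_assoc]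
      abel
    rw [hval] at hd
    exact hd
  have hhinv : ∀ s ∈ I, ((B s).map (starRingEnd ℂ))ᵀ * A s - ((A s).map (starRingEnd ℂ))ᵀ * B s
      = (H₀.map (starRingEnd ℂ))ᵀ - H₀ := by
    intro s hs
    have hconst := const_on_of_deriv_zero hIconn
      (f := fun u => ((B u).map (starRingEnd ℂ))ᵀ * A u - ((A u).map (starRingEnd ℂ))ᵀ * B u)
      ?_ hs hs₀
    · beta_reduce at hconst
      rw [hconst, hA0, hB0]
      simp [Matrix.map_one]
    intro u hu
    have hd := ((((hBd u hu).matConj).matTranspose.matMul (hAd u hu)).sub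
      ((((hAd u hu).matConj).matTranspose.matMul (hBd u hu))))
    have hmapneg : ∀ (X : Matrix (Fin n) (Fin n) ℂ),
        (-X).map (starRingEnd ℂ) = -(X.map (starRingEnd ℂ)) := by
      intro X; ext i j; simp [Matrix.map_apply]
    have hval : (((-((D u).map (fun x : ℝ => (x : ℂ))) * A u).map (starRingEnd ℂ))ᵀ * A u
        + ((B u).map (starRingEnd ℂ))ᵀ * (riccatiC n * B u))
        - (((riccatiC n * B u).map (starRingEnd ℂ))ᵀ * B u
          + ((A u).map (starRingEnd ℂ))ᵀ * (-((D u).map (fun x : ℝ => (x : ℂ))) * A u)) = 0 := by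
      rw [Matrix.map_mul, Matrix.map_mul, hmapneg, hDmconj u, riccatiC_real,
        Matrix.transpose_mul, Matrix.transpose_mul, Matrix.transpose_neg, hDmsymm u hu,
        riccatiC_symm.eq]
      simp only [Matrix.neg_mul, Matrix.mul_neg, Matrix.mul_assoc]
      abel
    rw [hval] at hd
    exact hd
  -- invertibility of A
  have hdet : ∀ s ∈ I, IsUnit (A s).det := by
    intro s hs
    rw [isUnit_iff_ne_zero]
    intro hdet0
    obtain ⟨v, hv0, hAv⟩ := Matrix.exists_mulVec_eq_zero_iff.mpr hdet0
    have h1 := congrArg (fun X => star v ⬝ᵥ (X *ᵥ v)) (hhinv s hs)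
    simp only [Matrix.sub_mulVec, dotProduct_sub, ← Matrix.mulVec_mulVec] at h1
    rw [hAv] at h1
    have hz1 : star v ⬝ᵥ (((B s).map (starRingEnd ℂ))ᵀ *ᵥ (0 : Fin n → ℂ)) = 0 := by
      rw [Matrix.mulVec_zero, dotProduct_zero]
    have hz2 : star v ⬝ᵥ (((A s).map (starRingEnd ℂ))ᵀ *ᵥ ((B s) *ᵥ v)) = 0 := by
      rw [conjT_mulVec, hAv]
      simp
    have hq1 : star v ⬝ᵥ ((H₀.map (starRingEnd ℂ))ᵀ *ᵥ v)
        = (starRingEnd ℂ) (star v ⬝ᵥ (H₀ *ᵥ v)) := by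
      rw [conjT_mulVec, conj_dot]
    rw [hz1, hz2, hq1] at h1
    have h2 : ((starRingEnd ℂ) (star v ⬝ᵥ (H₀ *ᵥ v)) - star v ⬝ᵥ (H₀ *ᵥ v)).im = 0 := by
      rw [← h1]
      simp
    have h3 := posdef_complex_quad hH₀symm hH₀pos hv0
    simp only [Complex.sub_im, Complex.conj_im] at h2
    linarith
  set H : ℝ → Matrix (Fin n) (Fin n) ℂ := fun u => B u * (A u)⁻¹ with hH
  have hH0 : H s₀ = H₀ := by
    show B s₀ * (A s₀)⁻¹ = H₀
    rw [hA0, hB0, inv_one, Matrix.mul_one]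
  refine ⟨H, hH0, ?_, ?_⟩
  · -- the Riccati equation
    intro s hs
    have hdiffA : DifferentiableAt ℝ A s := (hAd s hs).differentiableAt
    have hdiffinv : DifferentiableAt ℝ (fun u => (A u)⁻¹) s :=
      differentiableAt_matinv hdiffA (hdet s hs).ne_zero
    obtain ⟨G', hG'⟩ : ∃ G', HasDerivAt (fun u => (A u)⁻¹) G' s := ⟨_, hdiffinv.hasDerivAt⟩
    have hone : (fun u => A u * (A u)⁻¹)
        =ᶠ[nhds s] (fun _ => (1 : Matrix (Fin n) (Fin n) ℂ)) := by
      filter_upwards [hIopen.mem_nhds hs] with u hu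
      exact Matrix.mul_nonsing_inv _ (hdet u hu)
    have hd1 : HasDerivAt (fun u => A u * (A u)⁻¹)
        ((riccatiC n * B s) * (A s)⁻¹ + A s * G') s := (hAd s hs).matMul hG'
    have hd2 : HasDerivAt (fun u => A u * (A u)⁻¹) 0 s :=
      (hasDerivAt_const s (1 : Matrix (Fin n) (Fin n) ℂ)).congr_of_eventuallyEq hone
    have hzero := hd1.unique hd2
    have hG'eq : G' = -((A s)⁻¹ * ((riccatiC n * B s) * (A s)⁻¹)) := by
      have h4 : A s * G' = -((riccatiC n * B s) * (A s)⁻¹) :=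
        eq_neg_of_add_eq_zero_right hzero
      calc G' = 1 * G' := (Matrix.one_mul _).symm
        _ = ((A s)⁻¹ * A s) * G' := by rw [Matrix.nonsing_inv_mul _ (hdet s hs)]
        _ = (A s)⁻¹ * (A s * G') := by rw [Matrix.mul_assoc]
        _ = -((A s)⁻¹ * ((riccatiC n * B s) * (A s)⁻¹)) := by rw [h4, Matrix.mul_neg]
    have hd3 : HasDerivAt H ((-((D s).map (fun x : ℝ => (x : ℂ))) * A s) * (A s)⁻¹ + B s * G') s :=
      (hBd s hs).matMul hG'
    have hval : (-((D s).map (fun x : ℝ => (x : ℂ))) * A s) * (A s)⁻¹ + B s * G'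
        = -(H s * riccatiC n * H s + (D s).map (fun x => (x : ℂ))) := by
      rw [hG'eq]
      show _ = -((B s * (A s)⁻¹) * riccatiC n * (B s * (A s)⁻¹) + _)
      simp only [Matrix.neg_mul, Matrix.mul_neg, Matrix.mul_assoc, neg_add]
      rw [Matrix.mul_nonsing_inv _ (hdet s hs), Matrix.mul_one]
      abel
    rw [hval] at hd3
    exact hd3
  · -- symmetry and positivity
    intro s hs
    have hdetS : IsUnit (A s).det := hdet s hs
    have hg0 : (B s)ᵀ * A s = (A s)ᵀ * B s := by
      have h0 : H₀ᵀ - H₀ = 0 := by rw [hH₀symm.eq, sub_self]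
      have h5 := hginv s hs
      rw [h0] at h5
      exact sub_eq_zero.mp h5
    have hHsT : (H s)ᵀ = H s := by
      show (B s * (A s)⁻¹)ᵀ = B s * (A s)⁻¹
      rw [Matrix.transpose_mul, Matrix.transpose_nonsing_inv]
      have hdetT : IsUnit ((A s)ᵀ).det := by rw [Matrix.det_transpose]; exact hdetS
      have hBt : (B s)ᵀ = (A s)ᵀ * (B s * (A s)⁻¹) := by
        rw [← Matrix.mul_assoc, ← hg0, Matrix.mul_assoc, Matrix.mul_nonsing_inv _ hdetS,
          Matrix.mul_one]
      rw [hBt, ← Matrix.mul_assoc, Matrix.nonsing_inv_mul _ hdetT, Matrix.one_mul]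
    refine ⟨hHsT, Matrix.PosDef.of_dotProduct_mulVec_pos ?_ ?_⟩
    · -- IsHermitian of the real matrix Im H
      show ((H s).map Complex.im)ᴴ = (H s).map Complex.im
      have hsym2 : ((H s).map Complex.im)ᵀ = (H s).map Complex.im := by
        rw [← Matrix.transpose_map, hHsT]
      have hct : ((H s).map Complex.im)ᴴ = ((H s).map Complex.im)ᵀ := by
        ext i j
        simp [Matrix.conjTranspose_apply]
      rw [hct, hsym2]
    · -- positivity
      intro x hx
      set xc : Fin n → ℂ := fun i => ((x i : ℝ) : ℂ) with hxc
      have hxc0 : xc ≠ 0 := by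
        intro hcon
        apply hx
        funext i
        have h6 := congrFun hcon i
        simpa [hxc] using h6
      set w : Fin n → ℂ := (A s)⁻¹ *ᵥ xc with hw
      have hAw : A s *ᵥ w = xc := by
        rw [hw, Matrix.mulVec_mulVec, Matrix.mul_nonsing_inv _ hdetS, Matrix.one_mulVec]
      have hw0 : w ≠ 0 := by
        intro hcon
        apply hxc0
        rw [← hAw, hcon, Matrix.mulVec_zero]
      have hBw : H s *ᵥ xc = B s *ᵥ w := by
        show (B s * (A s)⁻¹) *ᵥ xc = _
        rw [← Matrix.mulVec_mulVec, ← hw]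
      set q : ℂ := star xc ⬝ᵥ (H s *ᵥ xc) with hq
      set q₀ : ℂ := star w ⬝ᵥ (H₀ *ᵥ w) with hq₀
      have him : q.im = q₀.im := by
        have h1 := congrArg (fun X => star w ⬝ᵥ (X *ᵥ w)) (hhinv s hs)
        simp only [Matrix.sub_mulVec, dotProduct_sub, ← Matrix.mulVec_mulVec] at h1
        rw [conjT_mulVec, conjT_mulVec, conjT_mulVec] at h1
        rw [hAw] at h1
        have h2 : star (B s *ᵥ w) ⬝ᵥ xc = (starRingEnd ℂ) q := by
          rw [hq, conj_dot, hBw]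
        have h3 : star xc ⬝ᵥ (B s *ᵥ w) = q := by rw [hq, hBw]
        have h4 : star (H₀ *ᵥ w) ⬝ᵥ w = (starRingEnd ℂ) q₀ := by rw [hq₀, conj_dot]
        rw [h2, h3, h4, ← hq₀] at h1
        have h5 := congrArg Complex.im h1
        simp only [Complex.sub_im, Complex.conj_im] at h5
        linarith
      have hq₀pos : 0 < q₀.im := posdef_complex_quad hH₀symm hH₀pos hw0
      have hfinal : star x ⬝ᵥ (((H s).map Complex.im) *ᵥ x) = q.im := by
        rw [hq]
        simp only [dotProduct, mulVec, Matrix.map_apply, Pi.star_apply,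
          Complex.star_def, Finset.mul_sum, Complex.im_sum, star_trivial]
        refine Finset.sum_congr rfl fun i _ => ?_
        refine Finset.sum_congr rfl fun j _ => ?_
        simp only [hxc, Complex.conj_ofReal, Complex.mul_im, Complex.mul_re,
          Complex.ofReal_re, Complex.ofReal_im]
        ring
      rw [hfinal, him]
      exact hq₀pos
theorem riccati_unique {I : Set ℝ} (hIopen : IsOpen I) (hIconn : I.OrdConnected)
    {D : ℝ → Matrix (Fin n) (Fin n) ℝ} {s₀ : ℝ} (hs₀ : s₀ ∈ I)
    {H₁ H₂ : ℝ → Matrix (Fin n) (Fin n) ℂ}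
    (h10 : H₁ s₀ = H₂ s₀)
    (h1d : ∀ s ∈ I, HasDerivAt H₁ (-(H₁ s * riccatiC n * H₁ s + (D s).map (fun x => (x:ℂ)))) s)
    (h2d : ∀ s ∈ I, HasDerivAt H₂ (-(H₂ s * riccatiC n * H₂ s + (D s).map (fun x => (x:ℂ)))) s) :
    Set.EqOn H₁ H₂ I := by
  intro t ht
  have hminI : min s₀ t ∈ I := by
    rcases le_total s₀ t with h | h
    · rwa [min_eq_left h]
    · rwa [min_eq_right h]
  have hmaxI : max s₀ t ∈ I := by
    rcases le_total s₀ t with h | h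
    · rwa [max_eq_right h]
    · rwa [max_eq_left h]
  obtain ⟨η₁, hη₁, hb₁⟩ := Metric.isOpen_iff.mp hIopen (min s₀ t) hminI
  obtain ⟨η₂, hη₂, hb₂⟩ := Metric.isOpen_iff.mp hIopen (max s₀ t) hmaxI
  obtain ⟨a, ha⟩ : ∃ x : ℝ, x = min s₀ t - η₁/2 := ⟨_, rfl⟩
  obtain ⟨b, hb⟩ : ∃ x : ℝ, x = max s₀ t + η₂/2 := ⟨_, rfl⟩
  have haI : a ∈ I := hb₁ (by rw [mem_ball, Real.dist_eq, ha, abs_of_nonpos] <;> linarith)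
  have hbI : b ∈ I := hb₂ (by rw [mem_ball, Real.dist_eq, hb, abs_of_nonneg] <;> linarith)
  have hab : Icc a b ⊆ I := hIconn.out haI hbI
  have hminmax : min s₀ t ≤ max s₀ t := min_le_max
  have hs₀ab : s₀ ∈ Ioo a b := by
    constructor
    · have := min_le_left s₀ t; linarith
    · have := le_max_left s₀ t; linarith
  have htab : t ∈ Icc a b := by
    constructor
    · have := min_le_right s₀ t; linarith
    · have := le_max_right s₀ t; linarith
  have hc1 : ContinuousOn H₁ (Icc a b) := fun u hu =>
    (h1d u (hab hu)).continuousAt.continuousWithinAt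
  have hc2 : ContinuousOn H₂ (Icc a b) := fun u hu =>
    (h2d u (hab hu)).continuousAt.continuousWithinAt
  obtain ⟨R₁, hR₁⟩ := isCompact_Icc.exists_bound_of_continuousOn hc1
  obtain ⟨R₂, hR₂⟩ := isCompact_Icc.exists_bound_of_continuousOn hc2
  obtain ⟨R, hR⟩ : ∃ x : ℝ, x = max (max R₁ R₂) 0 := ⟨_, rfl⟩
  have hR0 : 0 ≤ R := by rw [hR]; exact le_max_right _ _
  obtain ⟨K₀, hK₀⟩ : ∃ x : ℝ, x = 2 * R * ((n:ℝ) * ‖riccatiC n‖ * (n:ℝ)) := ⟨_, rfl⟩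
  have hK₀0 : 0 ≤ K₀ := by
    rw [hK₀]
    positivity
  have hlip : ∀ u : ℝ, LipschitzOnWith K₀.toNNReal
      (fun X : Matrix (Fin n) (Fin n) ℂ => -(X * riccatiC n * X + (D u).map (fun x => (x:ℂ))))
      (closedBall 0 R) := by
    intro u
    rw [lipschitzOnWith_iff_dist_le_mul]
    intro X hX Y hY
    rw [dist_eq_norm, dist_eq_norm]
    have hXn : ‖X‖ ≤ R := by rwa [mem_closedBall_zero_iff] at hX
    have hYn : ‖Y‖ ≤ R := by rwa [mem_closedBall_zero_iff] at hY
    have hexp : -(X * riccatiC n * X + (D u).map (fun x => (x:ℂ)))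
        - -(Y * riccatiC n * Y + (D u).map (fun x => (x:ℂ)))
        = -(X * riccatiC n * (X - Y) + (X - Y) * riccatiC n * Y) := by
      noncomm_ring
    rw [hexp, norm_neg]
    have h1 : ‖X * riccatiC n * (X - Y)‖ ≤ (n:ℝ) * ((n:ℝ) * ‖X‖ * ‖riccatiC n‖) * ‖X - Y‖ := by
      calc ‖X * riccatiC n * (X - Y)‖ ≤ (n:ℝ) * ‖X * riccatiC n‖ * ‖X - Y‖ :=
            matrix_norm_mul_le _ _
        _ ≤ (n:ℝ) * ((n:ℝ) * ‖X‖ * ‖riccatiC n‖) * ‖X - Y‖ := by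
            have h5 := matrix_norm_mul_le X (riccatiC n)
            have hn0 : (0:ℝ) ≤ (n:ℝ) := Nat.cast_nonneg n
            exact mul_le_mul_of_nonneg_right
              (mul_le_mul_of_nonneg_left h5 hn0) (norm_nonneg (X - Y))
    have h2 : ‖(X - Y) * riccatiC n * Y‖ ≤ (n:ℝ) * ((n:ℝ) * ‖X - Y‖ * ‖riccatiC n‖) * ‖Y‖ := by
      calc ‖(X - Y) * riccatiC n * Y‖ ≤ (n:ℝ) * ‖(X - Y) * riccatiC n‖ * ‖Y‖ :=
            matrix_norm_mul_le _ _
        _ ≤ (n:ℝ) * ((n:ℝ) * ‖X - Y‖ * ‖riccatiC n‖) * ‖Y‖ := by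
            have h5 := matrix_norm_mul_le (X - Y) (riccatiC n)
            have hn0 : (0:ℝ) ≤ (n:ℝ) := Nat.cast_nonneg n
            exact mul_le_mul_of_nonneg_right
              (mul_le_mul_of_nonneg_left h5 hn0) (norm_nonneg Y)
    have hKcoe : (K₀.toNNReal : ℝ) = K₀ := Real.coe_toNNReal _ hK₀0
    rw [hKcoe]
    calc ‖X * riccatiC n * (X - Y) + (X - Y) * riccatiC n * Y‖
        ≤ ‖X * riccatiC n * (X - Y)‖ + ‖(X - Y) * riccatiC n * Y‖ := norm_add_le _ _
      _ ≤ (n:ℝ) * ((n:ℝ) * ‖X‖ * ‖riccatiC n‖) * ‖X - Y‖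
          + (n:ℝ) * ((n:ℝ) * ‖X - Y‖ * ‖riccatiC n‖) * ‖Y‖ := add_le_add h1 h2
      _ = ((n:ℝ) * (n:ℝ) * ‖riccatiC n‖ * ‖X‖) * ‖X - Y‖
          + ((n:ℝ) * (n:ℝ) * ‖riccatiC n‖ * ‖Y‖) * ‖X - Y‖ := by ring
      _ ≤ ((n:ℝ) * (n:ℝ) * ‖riccatiC n‖ * R) * ‖X - Y‖
          + ((n:ℝ) * (n:ℝ) * ‖riccatiC n‖ * R) * ‖X - Y‖ := by
          have hc0 : (0:ℝ) ≤ (n:ℝ) * (n:ℝ) * ‖riccatiC n‖ := by positivity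
          exact add_le_add
            (mul_le_mul_of_nonneg_right (mul_le_mul_of_nonneg_left hXn hc0) (norm_nonneg _))
            (mul_le_mul_of_nonneg_right (mul_le_mul_of_nonneg_left hYn hc0) (norm_nonneg _))
      _ = K₀ * ‖X - Y‖ := by rw [hK₀]; ring
  have := ODE_solution_unique_of_mem_Icc
    (v := fun u (X : Matrix (Fin n) (Fin n) ℂ) =>
      -(X * riccatiC n * X + (D u).map (fun x => (x:ℂ))))
    (s := fun _ => closedBall 0 R) (K := K₀.toNNReal) (fun u _ => hlip u)
    hs₀ab hc1
    (fun u hu => h1d u (hab (Ioo_subset_Icc_self hu)))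
    (fun u hu => by
      rw [mem_closedBall_zero_iff]
      refine (hR₁ u (Ioo_subset_Icc_self hu)).trans ?_
      rw [hR]
      exact le_max_of_le_left (le_max_left _ _))
    hc2
    (fun u hu => h2d u (hab (Ioo_subset_Icc_self hu)))
    (fun u hu => by
      rw [mem_closedBall_zero_iff]
      refine (hR₂ u (Ioo_subset_Icc_self hu)).trans ?_
      rw [hR]
      exact le_max_of_le_left (le_max_right _ _))
    h10
  exact this htab

/-- The Riccati equation `H' + HCH + D = 0` on an open interval `I`,
with symmetric initial value `H₀` at `ŝ₀ ∈ I` whose imaginary part is positive definite,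
has exactly one differentiable solution; moreover this solution is symmetric with
positive definite imaginary part at every point of `I`. -/
theorem riccati_existence_uniqueness
    (n : ℕ) (hn : 1 ≤ n) (I : Set ℝ) (hIopen : IsOpen I) (hIconn : I.OrdConnected)
    (D : ℝ → Matrix (Fin n) (Fin n) ℝ) (hDcont : ContinuousOn D I)
    (hDsymm : ∀ s ∈ I, (D s).IsSymm)
    (s₀ : ℝ) (hs₀ : s₀ ∈ I)
    (H₀ : Matrix (Fin n) (Fin n) ℂ) (hH₀symm : H₀.IsSymm)
    (hH₀pos : (H₀.map Complex.im).PosDef) :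
    (∃ H : ℝ → Matrix (Fin n) (Fin n) ℂ, H s₀ = H₀ ∧ IsRiccatiSol n I D H ∧
      ∀ s ∈ I, (H s).IsSymm ∧ ((H s).map Complex.im).PosDef) ∧
    (∀ H₁ H₂ : ℝ → Matrix (Fin n) (Fin n) ℂ,
      H₁ s₀ = H₀ → IsRiccatiSol n I D H₁ →
      H₂ s₀ = H₀ → IsRiccatiSol n I D H₂ →
      Set.EqOn H₁ H₂ I) := by
  constructor
  · exact riccati_exists hIopen hIconn hDcont hDsymm hs₀ hH₀symm hH₀pos
  · intro H₁ H₂ h1 h1d h2 h2d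
    exact riccati_unique hIopen hIconn hs₀ (by rw [h1, h2]) h1d h2d
end

section
/- Let I ⊆ ℝ be an open interval, ŝ₀ ∈ I, and let Y₀, Z₀ ∈ ℂ^{n×n} with Y₀ invertible such that H₀ := Z₀Y₀⁻¹ is symmetric with Im H₀ positive definite. Suppose Y, Z : I → ℂ^{n×n} are differentiable and satisfy Y'(s) = C Z(s) and Z'(s) = −D(s) Y(s) for all s ∈ I, with Y(ŝ₀) = Y₀ and Z(ŝ₀) = Z₀. Then Y(s) is invertible for every s ∈ I. -/
open Matrix

attribute [local instance] Matrix.normedAddCommGroup Matrix.normedSpace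

private lemma hasDerivAt_entry {n : ℕ} {f : ℝ → Matrix (Fin n) (Fin n) ℂ}
    {f' : Matrix (Fin n) (Fin n) ℂ} {s : ℝ} (h : HasDerivAt f f' s) (j k : Fin n) :
    HasDerivAt (fun t => f t j k) (f' j k) s := by
  have := ((ContinuousLinearMap.proj (R := ℝ) (φ := fun _ : Fin n => ℂ) k).comp
    (ContinuousLinearMap.proj (R := ℝ) (φ := fun _ : Fin n => Fin n → ℂ) j)).hasFDerivAt.comp_hasDerivAt
    s h
  exact this

private lemma herm_sum_im_zero {n : ℕ} (A : Matrix (Fin n) (Fin n) ℂ)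
    (hA : ∀ j k, A j k = starRingEnd ℂ (A k j)) (u : Fin n → ℂ) :
    (∑ j, ∑ k, starRingEnd ℂ (u j) * (A j k * u k)).im = 0 := by
  have key : starRingEnd ℂ (∑ j, ∑ k, starRingEnd ℂ (u j) * (A j k * u k))
      = ∑ j, ∑ k, starRingEnd ℂ (u j) * (A j k * u k) := by
    rw [map_sum]
    simp_rw [map_sum, _root_.map_mul, Complex.conj_conj]
    rw [Finset.sum_comm]
    refine Finset.sum_congr rfl fun j _ => Finset.sum_congr rfl fun k _ => ?_
    rw [← hA j k]
    ring
  exact Complex.conj_eq_iff_im.mp key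

private lemma herm2 {n : ℕ} (A : Matrix (Fin n) (Fin n) ℂ)
    (hA : ∀ j k, A j k = starRingEnd ℂ (A k j)) (u : Fin n → ℂ) :
    (∑ j, starRingEnd ℂ (u j) * (∑ k, A j k * u k)).im = 0 := by
  simp_rw [Finset.mul_sum]
  exact herm_sum_im_zero A hA u

private lemma herm1 {n : ℕ} (A : Matrix (Fin n) (Fin n) ℂ)
    (hA : ∀ j k, A j k = starRingEnd ℂ (A k j)) (u : Fin n → ℂ) :
    (∑ j, starRingEnd ℂ (∑ k, A j k * u k) * u j).im = 0 := by
  have h : ∑ j, starRingEnd ℂ (∑ k, A j k * u k) * u j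
      = starRingEnd ℂ (∑ j, starRingEnd ℂ (u j) * (∑ k, A j k * u k)) := by
    rw [map_sum]
    refine Finset.sum_congr rfl fun j _ => ?_
    rw [_root_.map_mul, Complex.conj_conj]
    ring
  rw [h, Complex.conj_im, herm2 A hA u, neg_zero]

private lemma mul_entry_sum {n : ℕ} (A B : Matrix (Fin n) (Fin n) ℂ) (v : Fin n → ℂ)
    (j : Fin n) : ∑ k, (A * B) j k * v k = ∑ m, A j m * (∑ k, B m k * v k) := by
  simp_rw [Matrix.mul_apply, Finset.sum_mul, Finset.mul_sum, mul_assoc]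
  exact Finset.sum_comm

private lemma sum_antisymm {n : ℕ} (a q : Fin n → Fin n → ℝ) (ha : ∀ j k, a j k = a k j)
    (hq : ∀ j k, q j k = - q k j) : ∑ j, ∑ k, a j k * q j k = 0 := by
  have h : ∑ j, ∑ k, a j k * q j k = ∑ j, ∑ k, -(a j k * q j k) := by
    rw [Finset.sum_comm]
    refine Finset.sum_congr rfl fun j _ => Finset.sum_congr rfl fun k _ => ?_
    rw [ha k j, hq k j]; ring
  simp only [Finset.sum_neg_distrib] at h
  linarith

private lemma final_neg {n : ℕ} (H : Matrix (Fin n) (Fin n) ℂ) (hsymm : H.IsSymm)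
    (hpos : (H.map Complex.im).PosDef) (x : Fin n → ℂ) (hx : x ≠ 0) :
    (∑ j, starRingEnd ℂ (∑ m, H j m * x m) * x j).im < 0 := by
  let r : Fin n → ℝ := fun j => (x j).re
  let t : Fin n → ℝ := fun j => (x j).im
  have expand : (∑ j, starRingEnd ℂ (∑ m, H j m * x m) * x j).im
      = ∑ j, ∑ m, ((H j m).re * (r m * t j - t m * r j)
          - (H j m).im * (r m * r j + t m * t j)) := by
    rw [Complex.im_sum]
    refine Finset.sum_congr rfl fun j _ => ?_
    rw [Complex.mul_im, Complex.conj_re, Complex.conj_im, Complex.re_sum, Complex.im_sum]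
    simp_rw [Complex.mul_re, Complex.mul_im]
    rw [Finset.sum_mul, neg_mul, Finset.sum_mul, ← Finset.sum_neg_distrib,
      ← Finset.sum_add_distrib]
    refine Finset.sum_congr rfl fun m _ => ?_
    show _ = (H j m).re * ((x m).re * (x j).im - (x m).im * (x j).re)
      - (H j m).im * ((x m).re * (x j).re + (x m).im * (x j).im)
    ring
  have parta : ∑ j, ∑ m, (H j m).re * (r m * t j - t m * r j) = 0 := by
    refine sum_antisymm _ _ (fun j k => ?_) (fun j k => by ring)
    rw [hsymm.apply j k]
  have hbsum : ∑ j, ∑ m, (H j m).im * (r m * r j + t m * t j)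
      = star r ⬝ᵥ ((H.map Complex.im) *ᵥ r) + star t ⬝ᵥ ((H.map Complex.im) *ᵥ t) := by
    have comb : ∀ (f g : Fin n → ℝ), (∑ j, f j) + (∑ j, g j) = ∑ j, (f j + g j) :=
      fun f g => Finset.sum_add_distrib.symm
    simp only [dotProduct, Matrix.mulVec, Matrix.map_apply, Pi.star_apply,
      star_trivial]
    rw [comb]
    refine Finset.sum_congr rfl fun j _ => ?_
    rw [Finset.mul_sum, Finset.mul_sum, comb]
    refine Finset.sum_congr rfl fun m _ => ?_
    ring
  have hpos2 : 0 < star r ⬝ᵥ ((H.map Complex.im) *ᵥ r) + star t ⬝ᵥ ((H.map Complex.im) *ᵥ t) := by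
    have hrt : r ≠ 0 ∨ t ≠ 0 := by
      by_contra hcon
      push_neg at hcon
      apply hx
      funext j
      have h1 := congrFun hcon.1 j
      have h2 := congrFun hcon.2 j
      simp only [Pi.zero_apply] at h1 h2
      exact Complex.ext h1 h2
    rcases hrt with h | h
    · have := hpos.dotProduct_mulVec_pos h
      have h2 := hpos.posSemidef.dotProduct_mulVec_nonneg t
      linarith
    · have := hpos.dotProduct_mulVec_pos h
      have h2 := hpos.posSemidef.dotProduct_mulVec_nonneg r
      linarith
  rw [expand]
  simp only [Finset.sum_sub_distrib]
  rw [parta, hbsum]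
  linarith

/-- If `Y, Z` solve the first order linear system `Y' = C Z`,
`Z' = -D Y` on an open interval `I` with `Y(ŝ₀) = Y₀` invertible, `Z(ŝ₀) = Z₀`,
where `H₀ = Z₀ Y₀⁻¹` is symmetric with positive definite imaginary part, then
`Y(s)` is invertible for every `s ∈ I`. -/
theorem Y_invertible
    (n : ℕ) (hn : 1 ≤ n) (I : Set ℝ) (hIopen : IsOpen I) (hIconn : I.OrdConnected)
    (D : ℝ → Matrix (Fin n) (Fin n) ℝ) (hDcont : ContinuousOn D I)
    (hDsymm : ∀ s ∈ I, (D s).IsSymm)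
    (s₀ : ℝ) (hs₀ : s₀ ∈ I)
    (Y₀ Z₀ : Matrix (Fin n) (Fin n) ℂ) (hY₀ : IsUnit Y₀)
    (hH₀symm : (Z₀ * Y₀⁻¹).IsSymm)
    (hH₀pos : ((Z₀ * Y₀⁻¹).map Complex.im).PosDef)
    (Y Z : ℝ → Matrix (Fin n) (Fin n) ℂ)
    (hY : ∀ s ∈ I, HasDerivAt Y (riccatiC n * Z s) s)
    (hZ : ∀ s ∈ I, HasDerivAt Z (-((D s).map (fun x => (x : ℂ)) * Y s)) s)
    (hY0 : Y s₀ = Y₀) (hZ0 : Z s₀ = Z₀) :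
    ∀ s ∈ I, IsUnit (Y s) := by
  intro s hs
  by_contra hunit
  have hdet : (Y s).det = 0 := by
    by_contra hd
    exact hunit ((Matrix.isUnit_iff_isUnit_det _).mpr (isUnit_iff_ne_zero.mpr hd))
  obtain ⟨v, hv, hvz⟩ := Matrix.exists_mulVec_eq_zero_iff.mpr hdet
  -- the conserved quantity
  set g : ℝ → ℝ := fun r =>
    (∑ j, starRingEnd ℂ (∑ k, Z r j k * v k) * (∑ l, Y r j l * v l)).im with hgdef
  -- the matrix C is Hermitian
  have hC : ∀ j k, riccatiC n j k = starRingEnd ℂ (riccatiC n k j) := by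
    intro j k
    unfold riccatiC
    simp only [Matrix.of_apply]
    rcases eq_or_ne j k with rfl | h
    · split <;> simp [Complex.ext_iff]
    · rw [if_neg (by tauto), if_neg (by tauto), map_zero]
  -- g has zero derivative on I
  have key : ∀ t ∈ I, HasDerivAt g 0 t := by
    intro t ht
    have hDC : ∀ j k, (D t).map (fun x => (x : ℂ)) j k
        = starRingEnd ℂ ((D t).map (fun x => (x : ℂ)) k j) := by
      intro j k
      simp [Matrix.map_apply, (hDsymm t ht).apply j k]
    have hu : ∀ j : Fin n, HasDerivAt (fun r => ∑ l, Y r j l * v l)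
        (∑ l, (riccatiC n * Z t) j l * v l) t :=
      fun j => HasDerivAt.fun_sum fun l _ => (hasDerivAt_entry (hY t ht) j l).mul_const (v l)
    have hw : ∀ j : Fin n, HasDerivAt (fun r => ∑ k, Z r j k * v k)
        (∑ k, (-((D t).map (fun x => (x : ℂ)) * Y t)) j k * v k) t :=
      fun j => HasDerivAt.fun_sum fun k _ => (hasDerivAt_entry (hZ t ht) j k).mul_const (v k)
    have hcw : ∀ j : Fin n, HasDerivAt (fun r => starRingEnd ℂ (∑ k, Z r j k * v k))
        (starRingEnd ℂ (∑ k, (-((D t).map (fun x => (x : ℂ)) * Y t)) j k * v k)) t := by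
      intro j
      have := Complex.conjCLE.toContinuousLinearMap.hasFDerivAt.comp_hasDerivAt t (hw j)
      exact this
    have hf := HasDerivAt.fun_sum
      (fun j (_ : j ∈ (Finset.univ : Finset (Fin n))) => (hcw j).mul (hu j))
    have him := Complex.imCLM.hasFDerivAt.comp_hasDerivAt t hf
    simp only [Complex.imCLM_apply] at him
    -- the derivative is zero
    have hFim : (∑ j, (starRingEnd ℂ (∑ k, (-((D t).map (fun x => (x : ℂ)) * Y t)) j k * v k)
          * (∑ l, Y t j l * v l)
        + starRingEnd ℂ (∑ k, Z t j k * v k) * (∑ l, (riccatiC n * Z t) j l * v l))).im = 0 := by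
      rw [Finset.sum_add_distrib, Complex.add_im]
      have hA : (∑ j, starRingEnd ℂ (∑ k, (-((D t).map (fun x => (x : ℂ)) * Y t)) j k * v k)
          * (∑ l, Y t j l * v l)).im = 0 := by
        have heq : ∀ j : Fin n, ∑ k, (-((D t).map (fun x => (x : ℂ)) * Y t)) j k * v k
            = -(∑ m, (D t).map (fun x => (x : ℂ)) j m * (∑ l, Y t m l * v l)) := by
          intro j
          rw [← mul_entry_sum]
          simp only [Matrix.neg_apply, neg_mul]
          exact Finset.sum_neg_distrib _
        simp_rw [heq, map_neg, neg_mul]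
        rw [Finset.sum_neg_distrib, Complex.neg_im,
          herm1 _ hDC (fun m => ∑ l, Y t m l * v l), neg_zero]
      have hB : (∑ j, starRingEnd ℂ (∑ k, Z t j k * v k)
          * (∑ l, (riccatiC n * Z t) j l * v l)).im = 0 := by
        simp_rw [mul_entry_sum]
        exact herm2 _ hC (fun m => ∑ k, Z t m k * v k)
      rw [hA, hB, add_zero]
    rw [hgdef]
    rw [← hFim]
    exact him
  -- g is constant on I
  have hconv : Convex ℝ I := convex_iff_ordConnected.mpr hIconn
  have hconst : g s = g s₀ := hconv.is_const_of_fderivWithin_eq_zero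
    (fun x hx => (key x hx).differentiableAt.differentiableWithinAt)
    (fun x hx => by
      rw [fderivWithin_of_isOpen hIopen hx, (key x hx).hasFDerivAt.fderiv]
      ext y
      simp)
    hs hs₀
  -- g s = 0 since Y s *ᵥ v = 0
  have hzero : ∀ j, (∑ l, Y s j l * v l) = 0 := by
    intro j
    have := congrFun hvz j
    simpa [Matrix.mulVec, dotProduct] using this
  have hgs : g s = 0 := by
    rw [hgdef]
    simp only [hzero, mul_zero, Finset.sum_const_zero, Complex.zero_im]
  -- g s₀ < 0
  have hdetY₀ : IsUnit Y₀.det := (Matrix.isUnit_iff_isUnit_det _).mp hY₀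
  have hxj : ∀ j, (∑ l, Y₀ j l * v l) = (Y₀ *ᵥ v) j := by
    intro j
    simp [Matrix.mulVec, dotProduct]
  have hxne : (Y₀ *ᵥ v : Fin n → ℂ) ≠ 0 := by
    intro hxeq
    apply hv
    have : Y₀⁻¹ *ᵥ (Y₀ *ᵥ v) = v := by
      rw [Matrix.mulVec_mulVec, Matrix.nonsing_inv_mul _ hdetY₀, Matrix.one_mulVec]
    rw [hxeq, Matrix.mulVec_zero] at this
    exact this.symm
  have hZv : ∀ j, (∑ k, Z₀ j k * v k) = ∑ m, (Z₀ * Y₀⁻¹) j m * ((Y₀ *ᵥ v) m) := by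
    intro j
    have hcancel : (Z₀ * Y₀⁻¹) * Y₀ = Z₀ := Matrix.nonsing_inv_mul_cancel_right _ _ hdetY₀
    conv_lhs => rw [← hcancel]
    rw [mul_entry_sum]
    simp only [hxj]
  have hgs₀ : g s₀ < 0 := by
    rw [hgdef]
    simp only [hY0, hZ0]
    simp only [hZv, hxj]
    exact final_neg _ hH₀symm hH₀pos _ hxne
  rw [hconst] at hgs
  exact absurd hgs hgs₀.ne
end

section
/- Let I ⊆ ℝ be an open interval, ŝ₀ ∈ I, and let Y₀, Z₀ ∈ ℂ^{n×n} with Y₀ invertible such that H₀ := Z₀Y₀⁻¹ is symmetric with Im H₀ positive definite. Suppose Y, Z : I → ℂ^{n×n} are differentiable and satisfy Y'(s) = C Z(s) and Z'(s) = −D(s) Y(s) for all s ∈ I, with Y(ŝ₀) = Y₀ and Z(ŝ₀) = Z₀, and suppose Y(s) is invertible for every s ∈ I. Then for all s ∈ I, det(Im(Z(s)Y(s)⁻¹)) · |det Y(s)|² = det(Im H₀) · |det Y₀|². -/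
open Matrix

attribute [local instance] Matrix.normedAddCommGroup Matrix.normedSpace

section Helpers

variable {N : Type*} [Fintype N] {f g : ℝ → Matrix N N ℂ} {f' g' : Matrix N N ℂ} {s : ℝ}

private lemma entry_deriv (h : HasDerivAt f f' s) (i j : N) :
    HasDerivAt (fun t => f t i j) (f' i j) s :=
  hasDerivAt_pi.mp (hasDerivAt_pi.mp h i) j

private lemma matrix_deriv (h : ∀ i j : N, HasDerivAt (fun t => f t i j) (f' i j) s) :
    HasDerivAt f f' s :=
  hasDerivAt_pi.mpr fun i => hasDerivAt_pi.mpr (h i)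

private lemma mul_deriv (hf : HasDerivAt f f' s) (hg : HasDerivAt g g' s) :
    HasDerivAt (fun t => f t * g t) (f' * g s + f s * g') s := by
  apply matrix_deriv
  intro i j
  have key : HasDerivAt (fun t => ∑ l, f t i l * g t l j)
      (∑ l, (f' i l * g s l j + f s i l * g' l j)) s :=
    HasDerivAt.fun_sum fun l _ => (entry_deriv hf i l).mul (entry_deriv hg l j)
  convert key using 1
  simp [Matrix.mul_apply, Matrix.add_apply, Finset.sum_add_distrib]
  erw [Matrix.add_apply]
  simp [Matrix.mul_apply, Finset.sum_add_distrib]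

private lemma ct_deriv (hf : HasDerivAt f f' s) :
    HasDerivAt (fun t => (f t)ᴴ) f'ᴴ s := by
  apply matrix_deriv
  intro i j
  simpa [Matrix.conjTranspose_apply] using (entry_deriv hf j i).star

private lemma tr_deriv (hf : HasDerivAt f f' s) :
    HasDerivAt (fun t => (f t)ᵀ) f'ᵀ s := by
  apply matrix_deriv
  intro i j
  simpa [Matrix.transpose_apply] using entry_deriv hf j i

private lemma const_on {I : Set ℝ} (hIopen : IsOpen I) (hconv : Convex ℝ I)
    {f : ℝ → Matrix N N ℂ}
    (hf : ∀ s ∈ I, HasDerivAt f (0 : Matrix N N ℂ) s) {x y : ℝ} (hx : x ∈ I) (hy : y ∈ I) :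
    f x = f y := by
  apply hconv.is_const_of_fderivWithin_eq_zero (𝕜 := ℝ)
    (fun s hs => (hf s hs).differentiableAt.differentiableWithinAt) ?_ hx hy
  intro s hs
  erw [fderivWithin_eq_fderiv (hIopen.uniqueDiffOn s hs) (hf s hs).differentiableAt,
    (hf s hs).hasFDerivAt.fderiv]
  ext v
  simp
  rfl

end Helpers

private lemma riccatiC_ct (n : ℕ) : (riccatiC n)ᴴ = riccatiC n := by
  ext i j
  by_cases h : i = j <;>
    simp [riccatiC, Matrix.conjTranspose_apply, h, eq_comm, apply_ite (starRingEnd ℂ),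
      Complex.conj_ofNat]

private lemma riccatiC_tr (n : ℕ) : (riccatiC n)ᵀ = riccatiC n := by
  ext i j
  by_cases h : i = j <;>
    simp [riccatiC, Matrix.transpose_apply, h, eq_comm]

private lemma mapC_ct {n : ℕ} {A : Matrix (Fin n) (Fin n) ℝ} (h : A.IsSymm) :
    (A.map (fun x => (x : ℂ)))ᴴ = A.map (fun x => (x : ℂ)) := by
  ext i j
  have h1 : A j i = A i j := congrFun (congrFun h i) j
  simp [Matrix.conjTranspose_apply, Matrix.map_apply, h1]

private lemma mapC_tr {n : ℕ} {A : Matrix (Fin n) (Fin n) ℝ} (h : A.IsSymm) :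
    (A.map (fun x => (x : ℂ)))ᵀ = A.map (fun x => (x : ℂ)) := by
  ext i j
  have h1 : A j i = A i j := congrFun (congrFun h i) j
  simp [Matrix.transpose_apply, Matrix.map_apply, h1]

/-- entrywise: `H - conj H = (2i) • (Im H : ℂ)` -/
private lemma sub_conj_eq {n : ℕ} (H : Matrix (Fin n) (Fin n) ℂ) :
    H - H.map (starRingEnd ℂ) = (2 * Complex.I) • (H.map Complex.im).map (fun x => (x : ℂ)) := by
  ext i j
  simp only [Matrix.sub_apply, Matrix.map_apply, Matrix.smul_apply, smul_eq_mul]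
  apply Complex.ext <;> simp [Complex.sub_re, Complex.sub_im, mul_comm] <;> ring

/-- Key algebraic identity: if `Y` is invertible and `H = Z Y⁻¹` is symmetric, then
`Yᴴ Z - Zᴴ Y = Yᴴ (H - conj H) Y`. -/
private lemma key_identity {n : ℕ} {Ym Zm : Matrix (Fin n) (Fin n) ℂ} (hYu : IsUnit Ym)
    (hsymm : (Zm * Ym⁻¹).IsSymm) :
    Ymᴴ * Zm - Zmᴴ * Ym =
      Ymᴴ * ((2 * Complex.I) • ((Zm * Ym⁻¹).map Complex.im).map (fun x => (x : ℂ))) * Ym := by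
  set H := Zm * Ym⁻¹ with hH
  have hdet : IsUnit Ym.det := (Matrix.isUnit_iff_isUnit_det Ym).mp hYu
  have hdetH : IsUnit Ymᴴ.det := by
    rw [Matrix.det_conjTranspose]
    exact hdet.star
  have h1 : Ymᴴ * H * Ym = Ymᴴ * Zm := by
    rw [hH, Matrix.mul_assoc Ymᴴ, Matrix.mul_assoc Zm, Matrix.nonsing_inv_mul Ym hdet, mul_one]
  have hconj : H.map (starRingEnd ℂ) = Hᴴ := by
    ext i j
    have h2 : H j i = H i j := congrFun (congrFun hsymm i) j
    simp [Matrix.conjTranspose_apply, Matrix.map_apply, h2]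
  have h2 : Ymᴴ * H.map (starRingEnd ℂ) * Ym = Zmᴴ * Ym := by
    rw [hconj, hH, Matrix.conjTranspose_mul, Matrix.conjTranspose_nonsing_inv,
      ← Matrix.mul_assoc, Matrix.mul_nonsing_inv Ymᴴ hdetH, one_mul]
  rw [← sub_conj_eq, Matrix.mul_sub, Matrix.sub_mul, h1, h2]

/-- If `Y, Z` solve the linear system `Y' = C Z`, `Z' = -D Y` on an
open interval `I` with `Y(ŝ₀) = Y₀` invertible, `Z(ŝ₀) = Z₀`, `H₀ = Z₀ Y₀⁻¹` symmetric
with positive definite imaginary part, and `Y(s)` is invertible on `I`, then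
`det (Im (Z(s) Y(s)⁻¹)) · |det Y(s)|² = det (Im H₀) · |det Y₀|²` for all `s ∈ I`. -/
theorem det_im_H_mul_sq_abs_det_Y_const
    (n : ℕ) (hn : 1 ≤ n) (I : Set ℝ) (hIopen : IsOpen I) (hIconn : I.OrdConnected)
    (D : ℝ → Matrix (Fin n) (Fin n) ℝ) (hDcont : ContinuousOn D I)
    (hDsymm : ∀ s ∈ I, (D s).IsSymm)
    (s₀ : ℝ) (hs₀ : s₀ ∈ I)
    (Y₀ Z₀ : Matrix (Fin n) (Fin n) ℂ) (hY₀ : IsUnit Y₀)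
    (hH₀symm : (Z₀ * Y₀⁻¹).IsSymm)
    (hH₀pos : ((Z₀ * Y₀⁻¹).map Complex.im).PosDef)
    (Y Z : ℝ → Matrix (Fin n) (Fin n) ℂ)
    (hY : ∀ s ∈ I, HasDerivAt Y (riccatiC n * Z s) s)
    (hZ : ∀ s ∈ I, HasDerivAt Z (-((D s).map (fun x => (x : ℂ)) * Y s)) s)
    (hY0 : Y s₀ = Y₀) (hZ0 : Z s₀ = Z₀)
    (hYinv : ∀ s ∈ I, IsUnit (Y s)) :
    ∀ s ∈ I,
      ((Z s * (Y s)⁻¹).map Complex.im).det * ‖(Y s).det‖ ^ 2 =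
        ((Z₀ * Y₀⁻¹).map Complex.im).det * ‖Y₀.det‖ ^ 2 := by
  have hconv : Convex ℝ I := convex_iff_ordConnected.mpr hIconn
  -- B(s) = Yᵀ Z - Zᵀ Y has zero derivative on I
  have hB : ∀ s ∈ I, HasDerivAt (fun t => (Y t)ᵀ * Z t - (Z t)ᵀ * Y t)
      (0 : Matrix (Fin n) (Fin n) ℂ) s := by
    intro s hs
    have h := ((mul_deriv (tr_deriv (hY s hs)) (hZ s hs)).sub
      (mul_deriv (tr_deriv (hZ s hs)) (hY s hs)))
    convert h using 1
    · rfl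
    · rfl
    · rfl
    · rfl
    rw [Matrix.transpose_mul, Matrix.transpose_neg, Matrix.transpose_mul, riccatiC_tr,
      mapC_tr (hDsymm s hs)]
    simp only [Matrix.neg_mul, Matrix.mul_neg]
    rw [Matrix.mul_assoc ((Z s)ᵀ), Matrix.mul_assoc ((Y s)ᵀ)]
    abel
  -- A(s) = Yᴴ Z - Zᴴ Y has zero derivative on I
  have hA : ∀ s ∈ I, HasDerivAt (fun t => (Y t)ᴴ * Z t - (Z t)ᴴ * Y t)
      (0 : Matrix (Fin n) (Fin n) ℂ) s := by
    intro s hs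
    have h := ((mul_deriv (ct_deriv (hY s hs)) (hZ s hs)).sub
      (mul_deriv (ct_deriv (hZ s hs)) (hY s hs)))
    convert h using 1
    · rfl
    · rfl
    · rfl
    · rfl
    rw [Matrix.conjTranspose_mul, Matrix.conjTranspose_neg, Matrix.conjTranspose_mul,
      riccatiC_ct, mapC_ct (hDsymm s hs)]
    simp only [Matrix.neg_mul, Matrix.mul_neg]
    rw [Matrix.mul_assoc ((Z s)ᴴ), Matrix.mul_assoc ((Y s)ᴴ)]
    abel
  have hY₀det : IsUnit Y₀.det := (Matrix.isUnit_iff_isUnit_det Y₀).mp hY₀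
  have hY₀tdet : IsUnit Y₀ᵀ.det := by rw [Matrix.det_transpose]; exact hY₀det
  -- B is identically zero on I, hence H(s) is symmetric
  have h0 : Y₀ᵀ * Z₀ = Z₀ᵀ * Y₀ := by
    have hs' : (Z₀ * Y₀⁻¹)ᵀ = Z₀ * Y₀⁻¹ := hH₀symm
    calc Y₀ᵀ * Z₀ = Y₀ᵀ * (Z₀ * Y₀⁻¹ * Y₀) := by
          rw [Matrix.mul_assoc Z₀, Matrix.nonsing_inv_mul Y₀ hY₀det, mul_one]
      _ = Y₀ᵀ * ((Z₀ * Y₀⁻¹)ᵀ * Y₀) := by rw [hs']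
      _ = Y₀ᵀ * (Y₀⁻¹ᵀ * (Z₀ᵀ * Y₀)) := by rw [Matrix.transpose_mul, Matrix.mul_assoc]
      _ = (Y₀ᵀ * Y₀ᵀ⁻¹) * (Z₀ᵀ * Y₀) := by
          rw [Matrix.transpose_nonsing_inv, Matrix.mul_assoc]
      _ = Z₀ᵀ * Y₀ := by rw [Matrix.mul_nonsing_inv Y₀ᵀ hY₀tdet, one_mul]
  have hB0 : ∀ s ∈ I, (Y s)ᵀ * Z s = (Z s)ᵀ * Y s := by
    intro s hs
    have h := const_on hIopen hconv hB hs hs₀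
    rw [hY0, hZ0, h0, sub_self] at h
    exact sub_eq_zero.mp h
  have hsymmS : ∀ s ∈ I, (Z s * (Y s)⁻¹).IsSymm := by
    intro s hs
    have hdet : IsUnit (Y s).det := (Matrix.isUnit_iff_isUnit_det _).mp (hYinv s hs)
    have hdetT : IsUnit ((Y s)ᵀ).det := by rw [Matrix.det_transpose]; exact hdet
    show (Z s * (Y s)⁻¹)ᵀ = Z s * (Y s)⁻¹
    rw [Matrix.transpose_mul, Matrix.transpose_nonsing_inv]
    calc ((Y s)ᵀ)⁻¹ * (Z s)ᵀ
        = ((Y s)ᵀ)⁻¹ * ((Z s)ᵀ * (Y s * (Y s)⁻¹)) := by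
          rw [Matrix.mul_nonsing_inv _ hdet, mul_one]
      _ = ((Y s)ᵀ)⁻¹ * (((Z s)ᵀ * Y s) * (Y s)⁻¹) := by rw [Matrix.mul_assoc]
      _ = ((Y s)ᵀ)⁻¹ * (((Y s)ᵀ * Z s) * (Y s)⁻¹) := by rw [hB0 s hs]
      _ = (((Y s)ᵀ)⁻¹ * (Y s)ᵀ) * (Z s * (Y s)⁻¹) := by
          rw [Matrix.mul_assoc, Matrix.mul_assoc]
      _ = Z s * (Y s)⁻¹ := by rw [Matrix.nonsing_inv_mul _ hdetT, one_mul]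
  -- main argument via determinants of the constant matrix A
  have hmapdet : ∀ M : Matrix (Fin n) (Fin n) ℝ,
      (M.map (fun x => (x : ℂ))).det = (M.det : ℂ) := fun M => by
    exact (RingHom.map_det Complex.ofRealHom M).symm
  intro s hs
  have hAc := const_on hIopen hconv hA hs hs₀
  rw [hY0, hZ0, key_identity (hYinv s hs) (hsymmS s hs), key_identity hY₀ hH₀symm] at hAc
  have hdetEq := congrArg Matrix.det hAc
  rw [Matrix.det_mul, Matrix.det_mul, Matrix.det_mul, Matrix.det_mul,
    Matrix.det_smul, Matrix.det_smul, Matrix.det_conjTranspose, Matrix.det_conjTranspose,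
    hmapdet, hmapdet] at hdetEq
  simp only [Fintype.card_fin, Complex.star_def] at hdetEq
  have h2 : (2 * Complex.I) ^ n ≠ 0 := pow_ne_zero _ (by simp [Complex.I_ne_zero])
  set dS := ((Z s * (Y s)⁻¹).map Complex.im).det with hdS
  set d₀ := ((Z₀ * Y₀⁻¹).map Complex.im).det with hd₀
  set yS := (Y s).det with hyS
  set y₀ := Y₀.det with hy₀
  have key : (dS : ℂ) * ((starRingEnd ℂ) yS * yS) = (d₀ : ℂ) * ((starRingEnd ℂ) y₀ * y₀) :=
    mul_left_cancel₀ h2 (by linear_combination hdetEq)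
  rw [mul_comm ((starRingEnd ℂ) yS), Complex.mul_conj, mul_comm ((starRingEnd ℂ) y₀),
    Complex.mul_conj] at key
  rw [Complex.sq_norm, Complex.sq_norm]
  exact_mod_cast key
end

section
/- Let n ≥ 2 and let ξ₀, ξ₁, ξ₂ ∈ ℝ^{1+n} be lightlike vectors. If ξ₀ lies in the real linear span of ξ₁ and ξ₂, then ξ₀ is a real scalar multiple of ξ₁ or ξ₀ is a real scalar multiple of ξ₂. -/
/-- The Minkowski quadratic form `q(v) = -(v⁰)² + Σ_{i=1}^n (vⁱ)²` on `ℝ^{1+n}`. -/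
def minkQ (n : ℕ) (v : Fin (n + 1) → ℝ) : ℝ :=
  -(v 0) ^ 2 + ∑ i : Fin n, (v i.succ) ^ 2

/-- A vector of `ℝ^{1+n}` is lightlike if it is nonzero and null for the
Minkowski quadratic form. -/
def IsLightlike (n : ℕ) (v : Fin (n + 1) → ℝ) : Prop :=
  v ≠ 0 ∧ minkQ n v = 0

/-- The Minkowski bilinear form. -/
def minkB (n : ℕ) (u v : Fin (n + 1) → ℝ) : ℝ :=
  -(u 0 * v 0) + ∑ i : Fin n, u i.succ * v i.succ

lemma minkB_comm (n : ℕ) (u v : Fin (n + 1) → ℝ) : minkB n u v = minkB n v u := by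
  simp [minkB, mul_comm]

lemma minkQ_smul_add (n : ℕ) (a b : ℝ) (u v : Fin (n + 1) → ℝ) :
    minkQ n (a • u + b • v) =
      a ^ 2 * minkQ n u + 2 * a * b * minkB n u v + b ^ 2 * minkQ n v := by
  have h : ∀ i : Fin n, (a * u i.succ + b * v i.succ) ^ 2 =
      a ^ 2 * (u i.succ) ^ 2 + 2 * a * b * (u i.succ * v i.succ)
        + b ^ 2 * (v i.succ) ^ 2 := fun i => by ring
  simp only [minkQ, minkB, Pi.add_apply, Pi.smul_apply, smul_eq_mul, h,
    Finset.sum_add_distrib, ← Finset.mul_sum]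
  ring

lemma zero_of_time_zero (n : ℕ) (u : Fin (n + 1) → ℝ) (h0 : u 0 = 0)
    (hq : minkQ n u = 0) : u = 0 := by
  have hsum : ∑ i : Fin n, (u i.succ) ^ 2 = 0 := by
    have := hq; simp [minkQ, h0] at this; exact this
  have hz : ∀ i ∈ Finset.univ, (u (Fin.succ i)) ^ 2 = 0 :=
    (Finset.sum_eq_zero_iff_of_nonneg (fun i _ => sq_nonneg _)).1 hsum
  funext j
  refine Fin.cases ?_ ?_ j
  · exact h0
  · intro i
    have := hz i (Finset.mem_univ i)
    exact pow_eq_zero_iff (by norm_num) |>.1 this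

/-- Two Minkowski-orthogonal lightlike vectors are proportional. -/
lemma lightlike_orth (n : ℕ) (u v : Fin (n + 1) → ℝ)
    (hu : IsLightlike n u) (hv : IsLightlike n v) (hB : minkB n u v = 0) :
    ∃ c : ℝ, v = c • u := by
  have hu0 : u 0 ≠ 0 := by
    intro h
    exact hu.1 (zero_of_time_zero n u h hu.2)
  set c := v 0 / u 0 with hc
  refine ⟨c, ?_⟩
  have hw : v - c • u = (1 : ℝ) • v + (-c) • u := by
    funext j; simp; ring
  have hq : minkQ n (v - c • u) = 0 := by
    rw [hw, minkQ_smul_add]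
    rw [minkB_comm] at hB
    rw [hB, hu.2, hv.2]
    ring
  have h0 : (v - c • u) 0 = 0 := by
    simp [hc]
    field_simp
    ring
  have := zero_of_time_zero n (v - c • u) h0 hq
  have : v - c • u = 0 := this
  funext j
  have := congrFun this j
  simpa [sub_eq_zero] using this

/-- If a lightlike vector `ξ₀` in `ℝ^{1+n}` (`n ≥ 2`) lies in the
real linear span of two lightlike vectors `ξ₁, ξ₂`, then it is a real scalar
multiple of `ξ₁` or of `ξ₂`. -/
theorem lightlike_mem_span_pair
    (n : ℕ) (hn : 2 ≤ n) (ξ₀ ξ₁ ξ₂ : Fin (n + 1) → ℝ)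
    (h₀ : IsLightlike n ξ₀) (h₁ : IsLightlike n ξ₁) (h₂ : IsLightlike n ξ₂)
    (hspan : ξ₀ ∈ Submodule.span ℝ ({ξ₁, ξ₂} : Set (Fin (n + 1) → ℝ))) :
    (∃ c : ℝ, ξ₀ = c • ξ₁) ∨ (∃ c : ℝ, ξ₀ = c • ξ₂) := by
  obtain ⟨a, b, hab⟩ := Submodule.mem_span_pair.1 hspan
  have hq : minkQ n (a • ξ₁ + b • ξ₂) = 0 := by rw [hab]; exact h₀.2
  rw [minkQ_smul_add, h₁.2, h₂.2] at hq
  have key : 2 * a * b * minkB n ξ₁ ξ₂ = 0 := by linarith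
  rcases mul_eq_zero.1 key with h | hB
  · rcases mul_eq_zero.1 h with h' | hb
    · rcases mul_eq_zero.1 h' with h2 | ha
      · norm_num at h2
      · right
        exact ⟨b, by rw [← hab, ha]; simp⟩
    · left
      exact ⟨a, by rw [← hab, hb]; simp⟩
  · obtain ⟨c, hc⟩ := lightlike_orth n ξ₁ ξ₂ h₁ h₂ hB
    left
    exact ⟨a + b * c, by rw [← hab, hc]; funext j; simp; ring⟩
end

section
/- Let d ≥ 1, let U ⊆ ℝ^d be an open bounded set containing 0, let c > 0, and let S : U → ℂ be continuous with Im S(x) ≥ c‖x‖² for all x ∈ U. Let F : ℝ^d → ℂ be a Lipschitz function whose (compact) support is contained in U. Then there exists a constant A > 0 such that for all λ ≥ 1, |∫_U (F(x) − F(0)) e^{iλS(x)} dx| ≤ A λ^{−(d+1)/2}. -/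
open MeasureTheory

/-- Let `U ⊆ ℝ^d` be open and bounded with `0 ∈ U`, let `c > 0`, let
`S : U → ℂ` be continuous with `Im S(x) ≥ c ‖x‖²` on `U`, and let `F : ℝ^d → ℂ` be a
Lipschitz function whose support is contained in `U`. Then there exists `A > 0` such
that for all `λ ≥ 1`, `|∫_U (F(x) - F(0)) e^{iλ S(x)} dx| ≤ A λ^{-(d+1)/2}`. -/
theorem integral_sub_exp_phase_decay
    (d : ℕ) (hd : 1 ≤ d) (U : Set (EuclideanSpace ℝ (Fin d)))
    (hUopen : IsOpen U) (hUbdd : Bornology.IsBounded U)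
    (h0U : (0 : EuclideanSpace ℝ (Fin d)) ∈ U)
    (c : ℝ) (hc : 0 < c)
    (S : EuclideanSpace ℝ (Fin d) → ℂ) (hScont : ContinuousOn S U)
    (hSim : ∀ x ∈ U, c * ‖x‖ ^ 2 ≤ (S x).im)
    (F : EuclideanSpace ℝ (Fin d) → ℂ)
    (hFlip : ∃ K : NNReal, LipschitzWith K F)
    (hFsupp : tsupport F ⊆ U) :
    ∃ A : ℝ, 0 < A ∧ ∀ lam : ℝ, 1 ≤ lam →
      ‖∫ x in U, (F x - F 0) * Complex.exp (Complex.I * lam * S x)‖ ≤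
        A * lam ^ (-(((d : ℝ) + 1) / 2)) := by
  obtain ⟨K, hK⟩ := hFlip
  set Kr : ℝ := (K : ℝ) + 1 with hKr
  have hKr0 : 0 < Kr := by positivity
  have hFbound : ∀ x, ‖F x - F 0‖ ≤ Kr * ‖x‖ := by
    intro x
    have := hK.dist_le_mul x 0
    rw [dist_eq_norm, dist_eq_norm, sub_zero] at this
    refine this.trans ?_
    have hK1 : (K : ℝ) ≤ Kr := by simp [hKr]
    exact mul_le_mul_of_nonneg_right hK1 (norm_nonneg x)
  -- the model function
  set g : EuclideanSpace ℝ (Fin d) → ℝ := fun y => ‖y‖ * Real.exp (-(c * ‖y‖ ^ 2)) with hg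
  have hg_cont : Continuous g :=
    continuous_norm.mul ((continuous_const.mul (continuous_norm.pow 2)).neg.rexp)
  have hg_nonneg : ∀ y, 0 ≤ g y := fun y => by positivity
  -- integrability of g
  have hgauss : Integrable (fun y : EuclideanSpace ℝ (Fin d) =>
      Real.exp (-(c / 2 * ‖y‖ ^ 2))) := by
    have h := (GaussianFourier.integrable_cexp_neg_mul_sq_norm_add
        (V := EuclideanSpace ℝ (Fin d)) (b := (c / 2 : ℂ)) (by simp [hc]) 0 0).norm
    refine h.congr ?_
    filter_upwards with y
    rw [Complex.norm_exp]
    have : (-((c : ℂ) / 2) * (‖y‖ : ℂ) ^ 2 + 0 * ((inner ℝ 0 y : ℝ) : ℂ))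
        = ((-(c / 2 * ‖y‖ ^ 2) : ℝ) : ℂ) := by push_cast; ring
    rw [this, Complex.ofReal_re]
  have hg_int : Integrable g := by
    set M : ℝ := max 1 (2 / c) with hM
    refine Integrable.mono' (hgauss.const_mul M) hg_cont.aestronglyMeasurable ?_
    filter_upwards with y
    rw [Real.norm_of_nonneg (hg_nonneg y)]
    set t : ℝ := ‖y‖ with ht
    have ht0 : 0 ≤ t := norm_nonneg _
    have key : t * Real.exp (-(c / 2 * t ^ 2)) ≤ M := by
      rcases le_total t 1 with h1 | h1
      · calc t * Real.exp (-(c / 2 * t ^ 2)) ≤ 1 * 1 := by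
              apply mul_le_mul h1 (Real.exp_le_one_iff.2 (neg_nonpos.2 (by positivity))) (Real.exp_nonneg _)
                zero_le_one
          _ ≤ M := by simp [hM]
      · have h2 : c / 2 * t ^ 2 ≤ Real.exp (c / 2 * t ^ 2) :=
          (Real.add_one_le_exp _).trans' (by linarith)
        have h3 : Real.exp (-(c / 2 * t ^ 2)) ≤ (c / 2 * t ^ 2)⁻¹ := by
          rw [Real.exp_neg]
          exact inv_anti₀ (by positivity) h2
        calc t * Real.exp (-(c / 2 * t ^ 2)) ≤ t * (c / 2 * t ^ 2)⁻¹ := by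
              exact mul_le_mul_of_nonneg_left h3 ht0
          _ = 2 / (c * t) := by field_simp
          _ ≤ 2 / c := by
              apply div_le_div_of_nonneg_left (by norm_num) hc
              nlinarith
          _ ≤ M := le_max_right _ _
    calc g y = (t * Real.exp (-(c / 2 * t ^ 2))) * Real.exp (-(c / 2 * t ^ 2)) := by
          rw [hg]
          simp only [← ht]
          rw [mul_assoc, ← Real.exp_add]
          ring_nf
      _ ≤ M * Real.exp (-(c / 2 * t ^ 2)) :=
          mul_le_mul_of_nonneg_right key (Real.exp_nonneg _)
  set I₀ : ℝ := ∫ y, g y with hI₀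
  have hI₀0 : 0 ≤ I₀ := integral_nonneg hg_nonneg
  refine ⟨Kr * (I₀ + 1), by positivity, fun lam hlam => ?_⟩
  have hlam0 : (0 : ℝ) < lam := lt_of_lt_of_le one_pos hlam
  set sq : ℝ := Real.sqrt lam with hsq
  have hsq0 : 0 < sq := Real.sqrt_pos.2 hlam0
  have hsqsq : sq ^ 2 = lam := Real.sq_sqrt hlam0.le
  -- the λ-dependent bound function
  set h : EuclideanSpace ℝ (Fin d) → ℝ := fun x => ‖x‖ * Real.exp (-(lam * c * ‖x‖ ^ 2))
    with hh
  have hh_nonneg : ∀ x, 0 ≤ h x := fun x => by positivity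
  have hh_cont : Continuous h :=
    continuous_norm.mul ((continuous_const.mul (continuous_norm.pow 2)).neg.rexp)
  have hh_le_g : ∀ x, h x ≤ g x := by
    intro x
    apply mul_le_mul_of_nonneg_left _ (norm_nonneg _)
    apply Real.exp_le_exp.2
    rw [neg_le_neg_iff]
    calc c * ‖x‖ ^ 2 = 1 * (c * ‖x‖ ^ 2) := by ring
      _ ≤ lam * (c * ‖x‖ ^ 2) := mul_le_mul_of_nonneg_right hlam (by positivity)
      _ = lam * c * ‖x‖ ^ 2 := by ring
  have hh_int : Integrable h :=
    hg_int.mono' hh_cont.aestronglyMeasurable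
      (by filter_upwards with x; rw [Real.norm_of_nonneg (hh_nonneg x)]; exact hh_le_g x)
  -- scaling identity : ∫ h = sq⁻¹ * (sq^d)⁻¹ * I₀
  have hcomp : ∀ x : EuclideanSpace ℝ (Fin d), g (sq • x) = sq * h x := by
    intro x
    simp only [hg, hh]
    have hns : ‖sq • x‖ = sq * ‖x‖ := by
      rw [norm_smul, Real.norm_eq_abs, abs_of_pos hsq0]
    rw [hns]
    have : c * (sq * ‖x‖) ^ 2 = lam * c * ‖x‖ ^ 2 := by
      rw [mul_pow, hsqsq]; ring
    rw [this]; ring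
  have hscale : ∫ x, h x = sq⁻¹ * ((sq ^ d)⁻¹ * I₀) := by
    have h1 : ∫ x, g (sq • x) = (sq ^ d)⁻¹ • ∫ x, g x := by
      have := MeasureTheory.Measure.integral_comp_smul_of_nonneg (μ := volume) g sq (hR := hsq0.le)
      rwa [finrank_euclideanSpace_fin] at this
    have h2 : ∫ x, g (sq • x) = sq * ∫ x, h x := by
      simp_rw [hcomp]
      exact MeasureTheory.integral_const_mul sq h
    rw [h2] at h1
    rw [smul_eq_mul] at h1
    field_simp at h1 ⊢
    linarith
  -- pointwise bound on U
  have hpt : ∀ x ∈ U, ‖(F x - F 0) * Complex.exp (Complex.I * lam * S x)‖ ≤ Kr * h x := by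
    intro x hx
    rw [norm_mul]
    have hexp : ‖Complex.exp (Complex.I * lam * S x)‖ ≤ Real.exp (-(lam * c * ‖x‖ ^ 2)) := by
      rw [Complex.norm_exp]
      apply Real.exp_le_exp.2
      have hre : (Complex.I * lam * S x).re = -(lam * (S x).im) := by
        simp [Complex.mul_re, Complex.mul_im]
      rw [hre, neg_le_neg_iff]
      calc lam * c * ‖x‖ ^ 2 = lam * (c * ‖x‖ ^ 2) := by ring
        _ ≤ lam * (S x).im := by
            exact mul_le_mul_of_nonneg_left (hSim x hx) hlam0.le
    calc ‖F x - F 0‖ * ‖Complex.exp (Complex.I * lam * S x)‖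
        ≤ (Kr * ‖x‖) * Real.exp (-(lam * c * ‖x‖ ^ 2)) :=
          mul_le_mul (hFbound x) hexp (norm_nonneg _) (by positivity)
      _ = Kr * h x := by rw [hh]; ring
  -- main estimate
  have step1 : ‖∫ x in U, (F x - F 0) * Complex.exp (Complex.I * lam * S x)‖ ≤
      ∫ x in U, Kr * h x := by
    apply norm_integral_le_of_norm_le ((hh_int.const_mul Kr).integrableOn)
    rw [ae_restrict_iff' hUopen.measurableSet]
    exact ae_of_all _ hpt
  have step2 : ∫ x in U, Kr * h x ≤ ∫ x, Kr * h x := by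
    apply setIntegral_le_integral (hh_int.const_mul Kr)
    exact ae_of_all _ fun x => mul_nonneg hKr0.le (hh_nonneg x)
  have step3 : ∫ x, Kr * h x = Kr * (sq⁻¹ * ((sq ^ d)⁻¹ * I₀)) := by
    rw [MeasureTheory.integral_const_mul, hscale]
  -- convert powers
  have hpow : sq⁻¹ * (sq ^ d)⁻¹ = lam ^ (-(((d : ℝ) + 1) / 2)) := by
    have h1 : sq⁻¹ * (sq ^ d)⁻¹ = (sq ^ (d + 1) : ℝ)⁻¹ := by
      rw [pow_succ, mul_inv]; ring
    have h2 : (sq ^ (d + 1) : ℝ) = lam ^ ((((d : ℝ) + 1)) / 2) := by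
      rw [hsq, Real.sqrt_eq_rpow, ← Real.rpow_natCast (lam ^ ((1 : ℝ) / 2)) (d + 1),
        ← Real.rpow_mul hlam0.le]
      congr 1
      push_cast
      ring
    rw [h1, h2, ← Real.rpow_neg hlam0.le]
  have hrpow_nonneg : (0 : ℝ) ≤ lam ^ (-(((d : ℝ) + 1) / 2)) :=
    Real.rpow_nonneg hlam0.le _
  calc ‖∫ x in U, (F x - F 0) * Complex.exp (Complex.I * lam * S x)‖
      ≤ ∫ x in U, Kr * h x := step1
    _ ≤ ∫ x, Kr * h x := step2
    _ = Kr * (sq⁻¹ * ((sq ^ d)⁻¹ * I₀)) := step3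
    _ = (Kr * I₀) * (sq⁻¹ * (sq ^ d)⁻¹) := by ring
    _ = (Kr * I₀) * lam ^ (-(((d : ℝ) + 1) / 2)) := by rw [hpow]
    _ ≤ (Kr * (I₀ + 1)) * lam ^ (-(((d : ℝ) + 1) / 2)) := by
        apply mul_le_mul_of_nonneg_right _ hrpow_nonneg
        exact mul_le_mul_of_nonneg_left (by linarith) hKr0.le
end
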